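/- arXiv:1507.01424 — 8 statements merged into one kernel-verified Lean document; each statement's English description precedes it below -/
import Mathlib

section
/- Suppose H : [0,T]×ℝⁿ×ℝⁿ → ℝ satisfies: (H1) t ↦ H(t,x,p) is measurable for all x,p; (H2) (x,p) ↦ H(t,x,p) is continuous for all t; (H3) p ↦ H(t,x,p) is convex for all (t,x). Let L(t,x,v) := sup_{p∈ℝⁿ} (⟨v,p⟩ − H(t,x,p)). Then: (L2) (x,v) ↦ L(t,x,v) is lower semicontinuous for every t; (L3) v ↦ L(t,x,v) is convex and proper (never −∞, not identically +∞) for every (t,x); (L4) for every (t,x,v) and every sequence x_i → x there exists a sequence v_i → v with L(t,x_i,v_i) → L(t,x,v). If additionally (H4) there is a measurable c : [0,T] → [0,∞) with |H(t,x,p) − H(t,x,q)| ≤ c(t)(1+|x|)|p−q| for all t,x,p,q, then (L5) |v| > c(t)(1+|x|) implies L(t,x,v) = +∞. If additionally H is continuous on [0,T]×ℝⁿ×ℝⁿ, then L is lower semicontinuous on [0,T]×ℝⁿ×ℝⁿ and (L6) for every (t,x,v) and every sequence (t_i,x_i) → (t,x) there exists v_i → v with L(t_i,x_i,v_i) → L(t,x,v).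 -/
open Filter Topology MeasureTheory Set Metric
open scoped RealInnerProductSpace Pointwise

noncomputable section

abbrev Eucl (n : ℕ) := EuclideanSpace ℝ (Fin n)

/-- Legendre–Fenchel transform in the last variable of a real-valued Hamiltonian:
`LFT H t x v = sup_p (⟪v,p⟫ − H t x p)`, with values in `EReal = ℝ ∪ {±∞}`. -/
def LFT {n : ℕ} (H : ℝ → Eucl n → Eucl n → ℝ) (t : ℝ) (x v : Eucl n) : EReal :=
  ⨆ p : Eucl n, ((⟪v, p⟫ - H t x p : ℝ) : EReal)

/-- Epigraph `E_L(t,x) = {(v,η) | L(t,x,v) ≤ η}` of the Lagrangian `L = LFT H`. -/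
def epiL {n : ℕ} (H : ℝ → Eucl n → Eucl n → ℝ) (t : ℝ) (x : Eucl n) : Set (Eucl n × ℝ) :=
  {q | LFT H t x q.1 ≤ (q.2 : EReal)}

/-- Legendre–Fenchel conjugate of an extended-real-valued function. -/
def eConj {n : ℕ} (φ : Eucl n → EReal) (v : Eucl n) : EReal :=
  ⨆ p : Eucl n, (((⟪v, p⟫ : ℝ) : EReal) - φ p)

/-- A modulus: `w(·,r)` measurable, `w(t,·)` nonnegative, nondecreasing, continuous,
subadditive with `w(t,0) = 0`. -/
def IsModulus (w : ℝ → ℝ → ℝ) : Prop :=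
  (∀ r, Measurable fun t => w t r) ∧
  ∀ t, (∀ r, 0 ≤ w t r) ∧ Monotone (w t) ∧ Continuous (w t) ∧
    (∀ a b : ℝ, 0 ≤ a → 0 ≤ b → w t (a + b) ≤ w t a + w t b) ∧ w t 0 = 0

/-- Convexity of an `EReal`-valued function. -/
def EConvex {F : Type*} [AddCommMonoid F] [Module ℝ F] (φ : F → EReal) : Prop :=
  ∀ v u : F, ∀ a b : ℝ, 0 ≤ a → 0 ≤ b → a + b = 1 →
    φ (a • v + b • u) ≤ (a : EReal) * φ v + (b : EReal) * φ u

/-- A proper extended-real-valued function: never `−∞` and not identically `+∞`. -/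
def EProper {F : Type*} (φ : F → EReal) : Prop :=
  (∀ v, φ v ≠ ⊥) ∧ ∃ v, φ v ≠ ⊤

/-- Lower bound for a convex function from a bound on the unit ball. -/
lemma convex_lb {n : ℕ} {f : Eucl n → ℝ} (hf : ConvexOn ℝ univ f) {A : ℝ}
    (hA : ∀ q : Eucl n, ‖q‖ ≤ 1 → |f q| ≤ A) : ∀ p : Eucl n, -(2 * A * ‖p‖) - A ≤ f p := by
  have hA0 : 0 ≤ A := le_trans (abs_nonneg _) (hA 0 (by simp))
  intro p
  rcases le_or_gt ‖p‖ 1 with h | h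
  · have := (abs_le.1 (hA p h)).1
    nlinarith [norm_nonneg p]
  · have hpos : (0:ℝ) < ‖p‖ := by linarith
    set θ : ℝ := ‖p‖⁻¹ with hθ
    have hθpos : 0 < θ := by positivity
    have hθle : θ ≤ 1 := by
      rw [hθ]
      exact inv_le_one_of_one_le₀ h.le
    have hcomb := hf.2 (mem_univ p) (mem_univ (0:Eucl n)) hθpos.le (by linarith : (0:ℝ) ≤ 1 - θ)
      (by ring)
    simp only [smul_zero, add_zero] at hcomb
    have hnorm : ‖θ • p‖ = 1 := by
      rw [norm_smul, Real.norm_eq_abs, abs_of_pos hθpos, hθ, inv_mul_cancel₀ hpos.ne']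
    have h1 := (abs_le.1 (hA _ hnorm.le)).1
    have h0 := abs_le.1 (hA 0 (by simp))
    have hfθ : f (θ • p) ≤ θ * f p + (1 - θ) * f 0 := hcomb
    have hθp : θ * ‖p‖ = 1 := inv_mul_cancel₀ hpos.ne'
    nlinarith [h0.2, h0.1]

/-- First-order optimality at the maximizer of `p ↦ ⟪v,p⟫ - f p - lam/2 ‖p‖²`. -/
lemma opt_grad {n : ℕ} {f : Eucl n → ℝ} (hconv : ConvexOn ℝ univ f) (v p₀ : Eucl n) {lam : ℝ}
    (hlam : 0 < lam)
    (hmax : ∀ p : Eucl n, ⟪v,p⟫ - f p - lam/2 * ‖p‖^2 ≤ ⟪v,p₀⟫ - f p₀ - lam/2 * ‖p₀‖^2) :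
    ∀ p : Eucl n, ⟪v,p⟫ - f p ≤ (⟪v,p₀⟫ - f p₀) + lam * ⟪p₀, p - p₀⟫ := by
  intro p
  set d : Eucl n := p - p₀ with hd
  have key : ∀ s : ℝ, 0 < s → s ≤ 1 →
      (⟪v,p⟫ - f p) - (⟪v,p₀⟫ - f p₀) - lam * ⟪p₀, d⟫ ≤ lam/2 * s * ‖d‖^2 := by
    intro s hs hs1
    have hq : p₀ + s • d = (1-s) • p₀ + s • p := by
      rw [hd]; module
    have hconvf : f (p₀ + s • d) ≤ (1-s) * f p₀ + s * f p := by
      rw [hq]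
      exact hconv.2 (mem_univ p₀) (mem_univ p) (by linarith) hs.le (by ring)
    have hnq : ‖p₀ + s • d‖^2 = ‖p₀‖^2 + 2 * (s * ⟪p₀, d⟫) + s^2 * ‖d‖^2 := by
      rw [norm_add_sq_real, real_inner_smul_right, norm_smul, Real.norm_eq_abs, mul_pow,
        sq_abs]
    have hinner : ⟪v, p₀ + s • d⟫ = ⟪v,p₀⟫ + s * ⟪v, d⟫ := by
      rw [inner_add_right, real_inner_smul_right]
    have hvd : ⟪v, d⟫ = ⟪v, p⟫ - ⟪v, p₀⟫ := by rw [hd, inner_sub_right]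
    have hm := hmax (p₀ + s • d)
    rw [hinner, hnq, hvd] at hm
    nlinarith
  by_contra hcon
  push_neg at hcon
  set X : ℝ := (⟪v,p⟫ - f p) - (⟪v,p₀⟫ - f p₀) - lam * ⟪p₀, d⟫ with hX
  have hX0 : 0 < X := by rw [hX]; linarith
  set s : ℝ := min 1 (X / (lam/2 * ‖d‖^2 + X)) with hs
  have hpos : 0 < lam/2 * ‖d‖^2 + X := by positivity
  have hspos : 0 < s := by
    apply lt_min one_pos
    positivity
  have hK := key s hspos (min_le_left _ _)
  have hs2 : s ≤ X / (lam/2 * ‖d‖^2 + X) := min_le_right _ _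
  have hfin : lam/2 * s * ‖d‖^2 < X := by
    have h1 : lam/2 * s * ‖d‖^2 ≤ lam/2 * (X / (lam/2 * ‖d‖^2 + X)) * ‖d‖^2 := by
      have : (0:ℝ) ≤ lam/2 * ‖d‖^2 := by positivity
      nlinarith
    have h2 : lam/2 * (X / (lam/2 * ‖d‖^2 + X)) * ‖d‖^2 < X := by
      have hlt : lam/2 * ‖d‖^2 / (lam/2 * ‖d‖^2 + X) < 1 := (div_lt_one hpos).2 (by linarith)
      calc lam/2 * (X / (lam/2 * ‖d‖^2 + X)) * ‖d‖^2
          = (lam/2 * ‖d‖^2 / (lam/2 * ‖d‖^2 + X)) * X := by ring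
        _ < 1 * X := mul_lt_mul_of_pos_right hlt hX0
        _ = X := one_mul X
    linarith
  linarith

lemma prox_step {n : ℕ} (f g : Eucl n → ℝ) (v : Eucl n) (r ε A lam ρ : ℝ)
    (hε : 0 < ε) (hε1 : ε ≤ 1)
    (hconv : ConvexOn ℝ univ f) (hcont : Continuous f)
    (hA : ∀ q : Eucl n, ‖q‖ ≤ 1 → |g q| ≤ A - 1)
    (hr : ∀ p : Eucl n, ⟪v,p⟫ - g p ≤ r)
    (hlam : lam = ε^2 / (2*(|r| + A + 1)))
    (hρ : ρ = 1 + (2/lam) * (‖v‖ + 4*A + 2))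
    (hclose : ∀ p : Eucl n, ‖p‖ ≤ ρ → |f p - g p| ≤ min ε 1) :
    ∃ u : Eucl n, ‖u - v‖ ≤ ε ∧ ∀ p : Eucl n, ⟪u,p⟫ - f p ≤ r + ε := by
  have hA1 : 1 ≤ A := by have h0 := abs_nonneg (g 0); have := hA 0 (by simp); linarith
  have hD : (0:ℝ) < |r| + A + 1 := by have := abs_nonneg r; linarith
  have hlampos : 0 < lam := by rw [hlam]; positivity
  have hρ1 : 1 ≤ ρ := by
    rw [hρ]
    have h1 : 0 ≤ (2/lam) * (‖v‖ + 4*A + 2) := by positivity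
    linarith
  have hfA : ∀ q : Eucl n, ‖q‖ ≤ 1 → |f q| ≤ A := by
    intro q hq
    have h1 := hclose q (hq.trans hρ1)
    have h2 := hA q hq
    have h3 : min ε 1 ≤ 1 := min_le_right _ _
    calc |f q| = |(f q - g q) + g q| := by ring_nf
      _ ≤ |f q - g q| + |g q| := abs_add_le _ _
      _ ≤ A := by linarith
  have hflb := convex_lb hconv hfA
  obtain ⟨G, hG⟩ : ∃ G : Eucl n → ℝ, G = fun p => ⟪v,p⟫ - f p - lam/2 * ‖p‖^2 := ⟨_, rfl⟩
  have hGapp : ∀ p : Eucl n, G p = ⟪v,p⟫ - f p - lam/2 * ‖p‖^2 := fun p => by rw [hG]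
  have hlamρ : ‖v‖ + 4*A + 2 ≤ lam/2 * ρ := by
    rw [hρ]
    have h1 : lam/2 * ((2/lam) * (‖v‖ + 4*A + 2)) = ‖v‖ + 4*A + 2 := by
      field_simp
    nlinarith
  have hcoerc : ∀ p : Eucl n, ρ ≤ ‖p‖ → G p ≤ -A - 2 := by
    intro p hp
    have h1 : ⟪v,p⟫ ≤ ‖v‖ * ‖p‖ := real_inner_le_norm v p
    have h2 := hflb p
    have hp1 : 1 ≤ ‖p‖ := hρ1.trans hp
    have h3 : (lam/2 * ρ) * ‖p‖ ≤ lam/2 * ‖p‖^2 := by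
      have h := mul_le_mul_of_nonneg_right hp
        (mul_nonneg (by positivity : (0:ℝ) ≤ lam/2) (norm_nonneg p))
      nlinarith [h]
    have h4 : (‖v‖ + 4*A + 2) * ‖p‖ ≤ lam/2 * ‖p‖^2 := by nlinarith
    have h5 : (0:ℝ) ≤ (2*A+2)*(‖p‖-1) := mul_nonneg (by linarith) (by linarith)
    rw [hGapp]
    nlinarith [h5]
  have hGcont : Continuous G := by
    rw [hG]
    apply Continuous.sub
    · exact (continuous_const.inner continuous_id').sub hcont
    · exact continuous_const.mul ((continuous_norm).pow 2)
  obtain ⟨p₀, hp₀mem, hp₀max⟩ := (isCompact_closedBall (0:Eucl n) ρ).exists_isMaxOn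
    ⟨0, mem_closedBall_self (by linarith)⟩ hGcont.continuousOn
  have hp₀ρ : ‖p₀‖ ≤ ρ := by rwa [mem_closedBall_zero_iff] at hp₀mem
  have hG0 : -A ≤ G 0 := by
    have : |f 0| ≤ A := hfA 0 (by simp)
    have habs := (abs_le.1 this).2
    have hG0eq : G 0 = -(f 0) := by
      rw [hGapp, inner_zero_right, norm_zero]; ring
    rw [hG0eq]; linarith [(abs_le.1 this).2]
  have hglob : ∀ p : Eucl n, G p ≤ G p₀ := by
    intro p
    rcases le_or_gt ‖p‖ ρ with h | h
    · exact hp₀max (by rwa [mem_closedBall_zero_iff])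
    · have := hcoerc p h.le
      have h0 := hp₀max (mem_closedBall_self (by linarith))
      calc G p ≤ -A - 2 := this
        _ ≤ G 0 := by linarith
        _ ≤ G p₀ := h0
  have hopt := opt_grad hconv v p₀ hlampos (by
    intro p
    have := hglob p
    rwa [hGapp, hGapp] at this)
  have hSbound : G p₀ ≤ r + ε := by
    have h1 := hclose p₀ hp₀ρ
    have h2 : min ε 1 ≤ ε := min_le_left _ _
    have h3 := hr p₀
    have h4 : (0:ℝ) ≤ lam/2 * ‖p₀‖^2 := by positivity
    have habs := (abs_le.1 h1).1
    rw [hGapp]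
    nlinarith
  refine ⟨v - lam • p₀, ?_, ?_⟩
  · -- distance bound
    have hkey0 : -(f 0) ≤ G p₀ - lam/2 * ‖p₀‖^2 := by
      have h := hopt 0
      simp only [inner_zero_right, zero_sub, sub_zero] at h
      have hinner : ⟪p₀, -p₀⟫ = -(‖p₀‖^2) := by
        rw [inner_neg_right, real_inner_self_eq_norm_sq]
      rw [hinner] at h
      rw [hGapp]
      nlinarith
    have hf0 : |f 0| ≤ A := hfA 0 (by simp)
    have hq : lam/2 * ‖p₀‖^2 ≤ |r| + A + 1 := by
      have := (abs_le.1 hf0).2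
      have habs : r ≤ |r| := le_abs_self r
      have hε1' : ε ≤ ε := le_refl ε
      nlinarith [hSbound, hkey0, (abs_le.1 hf0).1, le_abs_self r]
    have heq : v - lam • p₀ - v = -(lam • p₀) := by abel
    rw [heq, norm_neg, norm_smul, Real.norm_eq_abs, abs_of_pos hlampos]
    have hsq : (lam * ‖p₀‖)^2 ≤ ε^2 := by
      have h1 : (lam * ‖p₀‖)^2 = 2*lam*(lam/2 * ‖p₀‖^2) := by ring
      have h2 : 2*lam*(lam/2 * ‖p₀‖^2) ≤ 2*lam*(|r| + A + 1) :=
        mul_le_mul_of_nonneg_left hq (by positivity)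
      have h3 : 2*lam*(|r| + A + 1) = ε^2 := by
        rw [hlam]; field_simp
      linarith
    exact le_of_pow_le_pow_left₀ (two_ne_zero) hε.le hsq
  · intro p
    have h := hopt p
    have hu : ⟪v - lam • p₀, p⟫ = ⟪v,p⟫ - lam * ⟪p₀,p⟫ := by
      rw [inner_sub_left, real_inner_smul_left]
    have hip : ⟪p₀, p - p₀⟫ = ⟪p₀,p⟫ - ‖p₀‖^2 := by
      rw [inner_sub_right, real_inner_self_eq_norm_sq]
    have hGp₀ := hGapp p₀
    have h4 : (0:ℝ) ≤ lam/2 * ‖p₀‖^2 := by positivity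
    rw [hu]
    rw [hip] at h
    linarith [hSbound, hGp₀]

/-- A continuous convex function on `ℝⁿ` has an affine minorant given by an inner product. -/
lemma exists_minorant {n : ℕ} {f : Eucl n → ℝ} (hconv : ConvexOn ℝ univ f)
    (hcont : Continuous f) :
    ∃ (v : Eucl n) (C : ℝ), ∀ p : Eucl n, ⟪v,p⟫ - f p ≤ C := by
  have hsconv : Convex ℝ {q : Eucl n × ℝ | f q.1 < q.2} := by
    have h := hconv.convex_strict_epigraph
    have he : {p : Eucl n × ℝ | p.1 ∈ univ ∧ f p.1 < p.2} = {q : Eucl n × ℝ | f q.1 < q.2} := by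
      ext q; simp
    rwa [he] at h
  have hsopen : IsOpen {q : Eucl n × ℝ | f q.1 < q.2} :=
    isOpen_lt (hcont.comp continuous_fst) continuous_snd
  have hx : ((0:Eucl n), f 0) ∉ {q : Eucl n × ℝ | f q.1 < q.2} := by simp
  obtain ⟨F, hF⟩ := geometric_hahn_banach_open_point hsconv hsopen hx
  set c : ℝ := F ((0:Eucl n), (1:ℝ)) with hc
  have hdecomp : ∀ (p : Eucl n) (y : ℝ), F (p, y) = F (p, 0) + y * c := by
    intro p y
    have h1 : (p, y) = (p, (0:ℝ)) + y • ((0:Eucl n), (1:ℝ)) := by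
      simp [Prod.ext_iff]
    rw [h1, map_add, F.map_smul, smul_eq_mul, hc]
  have hkey : ∀ (p : Eucl n) (y : ℝ), f p < y → F (p, 0) + y * c < F ((0:Eucl n), 0) + f 0 * c := by
    intro p y hy
    have h2 := hF (p, y) hy
    rwa [hdecomp p y, hdecomp 0 (f 0)] at h2
  have hcneg : c < 0 := by
    have := hkey 0 (f 0 + 1) (by linarith)
    nlinarith
  have hfin : ∀ p : Eucl n, F (p, 0) + f p * c ≤ F ((0:Eucl n), 0) + f 0 * c := by
    intro p
    by_contra hcon
    push_neg at hcon
    have hcpos : (0:ℝ) < -c := by linarith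
    have hnum : (0:ℝ) < F (p, 0) + f p * c - (F ((0:Eucl n), 0) + f 0 * c) := by linarith
    have hε : (0:ℝ) < (F (p, 0) + f p * c - (F ((0:Eucl n), 0) + f 0 * c)) / (-c) / 2 :=
      div_pos (div_pos hnum hcpos) two_pos
    set ε := (F (p, 0) + f p * c - (F ((0:Eucl n), 0) + f 0 * c)) / (-c) / 2 with hεdef
    have h := hkey p (f p + ε) (by linarith)
    have hεc : ε * (-c) = (F (p, 0) + f p * c - (F ((0:Eucl n), 0) + f 0 * c)) / 2 := by
      rw [hεdef, div_div]
      have hne : c ≠ 0 := by linarith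
      field_simp
    nlinarith
  set ℓ : Eucl n →L[ℝ] ℝ := F.comp (ContinuousLinearMap.inl ℝ (Eucl n) ℝ) with hℓ
  have hℓapp : ∀ p : Eucl n, ℓ p = F (p, 0) := fun p => rfl
  refine ⟨(InnerProductSpace.toDual ℝ (Eucl n)).symm ((-c)⁻¹ • ℓ),
    (-c)⁻¹ * (F ((0:Eucl n), 0) + f 0 * c), ?_⟩
  intro p
  rw [InnerProductSpace.toDual_symm_apply]
  have happ : ((-c)⁻¹ • ℓ) p = (-c)⁻¹ * F (p, 0) := by
    rw [ContinuousLinearMap.smul_apply, smul_eq_mul, hℓapp]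
  rw [happ]
  have h := hfin p
  have hcpos : (0:ℝ) < -c := by linarith
  have h2 := mul_le_mul_of_nonneg_left h (inv_nonneg.2 hcpos.le)
  have e1 : (-c)⁻¹ * (F (p, 0) + f p * c) = (-c)⁻¹ * F (p, 0) - f p := by
    have hcne : c ≠ 0 := by linarith
    field_simp
    ring
  rw [← e1]
  exact h2

/-- Local uniform convergence of a jointly continuous function along a convergent sequence. -/
lemma unif_close {n : ℕ} {X : Type*} [MetricSpace X] (G : X → Eucl n → ℝ) (s : Set X)
    (hG : ContinuousOn (fun q : X × Eucl n => G q.1 q.2) (s ×ˢ (univ : Set (Eucl n))))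
    (z : X) (zi : ℕ → X) (hz : z ∈ s) (hzi : ∀ i, zi i ∈ s)
    (hconv : Tendsto zi atTop (𝓝 z)) :
    ∀ R ε : ℝ, 0 < ε → ∀ᶠ i in atTop, ∀ p : Eucl n, ‖p‖ ≤ R → |G (zi i) p - G z p| ≤ ε := by
  intro R ε hε
  have hK : IsCompact (insert z (range zi)) := hconv.isCompact_insert_range
  have hC : IsCompact ((insert z (range zi)) ×ˢ closedBall (0:Eucl n) R) :=
    hK.prod (isCompact_closedBall _ _)
  have hKs : insert z (range zi) ⊆ s :=
    insert_subset hz (range_subset_iff.2 hzi)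
  have hCsub : ((insert z (range zi)) ×ˢ closedBall (0:Eucl n) R) ⊆ s ×ˢ univ :=
    prod_mono hKs (subset_univ _)
  have hunif := hC.uniformContinuousOn_of_continuous (hG.mono hCsub)
  obtain ⟨δ, hδ, hδ'⟩ := Metric.uniformContinuousOn_iff.1 hunif ε hε
  have hev : ∀ᶠ i in atTop, zi i ∈ ball z δ := hconv (ball_mem_nhds z hδ)
  filter_upwards [hev] with i hi
  intro p hp
  have h1 : ((zi i), p) ∈ (insert z (range zi)) ×ˢ closedBall (0:Eucl n) R :=
    ⟨mem_insert_of_mem _ (mem_range_self i), mem_closedBall_zero_iff.2 hp⟩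
  have h2 : (z, p) ∈ (insert z (range zi)) ×ˢ closedBall (0:Eucl n) R :=
    ⟨mem_insert _ _, mem_closedBall_zero_iff.2 hp⟩
  have hd : dist ((zi i), p) (z, p) < δ := by
    rw [Prod.dist_eq]
    simp only [dist_self]
    rw [max_eq_left dist_nonneg]
    exact mem_ball.1 hi
  have := hδ' _ h1 _ h2 hd
  rw [Real.dist_eq] at this
  exact this.le

/-- Main approximation lemma: recovery sequences for locally uniformly convergent
convex Hamiltonians. -/
lemma lft_seq {n : ℕ} (Hi : ℕ → Eucl n → ℝ) (Hl : Eucl n → ℝ)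
    (hconvi : ∀ i, ConvexOn ℝ univ (Hi i)) (hconti : ∀ i, Continuous (Hi i))
    (hcontl : Continuous Hl)
    (hu : ∀ R ε : ℝ, 0 < ε → ∀ᶠ i in atTop, ∀ p : Eucl n, ‖p‖ ≤ R → |Hi i p - Hl p| ≤ ε)
    (v : Eucl n) :
    ∃ vi : ℕ → Eucl n, Tendsto vi atTop (𝓝 v) ∧
      Tendsto (fun i => ⨆ p : Eucl n, ((⟪vi i, p⟫ - Hi i p : ℝ) : EReal)) atTop
        (𝓝 (⨆ p : Eucl n, ((⟪v, p⟫ - Hl p : ℝ) : EReal))) := by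
  set L : EReal := ⨆ p : Eucl n, ((⟪v, p⟫ - Hl p : ℝ) : EReal) with hL
  have hpoint : ∀ p : Eucl n, Tendsto (fun i => Hi i p) atTop (𝓝 (Hl p)) := by
    intro p
    rw [Metric.tendsto_atTop]
    intro ε hε
    obtain ⟨N, hN⟩ := eventually_atTop.1 (hu ‖p‖ (ε/2) (half_pos hε))
    refine ⟨N, fun i hi => ?_⟩
    have := hN i hi p le_rfl
    rw [Real.dist_eq]
    linarith [this, half_lt_self hε, (abs_le.1 this).1, (abs_le.1 this).2]
  have hlower : ∀ (w : ℕ → Eucl n), Tendsto w atTop (𝓝 v) →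
      ∀ b : EReal, b < L →
      ∀ᶠ i in atTop, b < ⨆ p : Eucl n, ((⟪w i, p⟫ - Hi i p : ℝ) : EReal) := by
    intro w hw b hb
    rw [hL, lt_iSup_iff] at hb
    obtain ⟨p₁, hp₁⟩ := hb
    obtain ⟨cr, hcr1, hcr2⟩ := EReal.exists_between_coe_real hp₁
    have hcr2' : cr < ⟪v, p₁⟫ - Hl p₁ := by exact_mod_cast hcr2
    have htd : Tendsto (fun i => ⟪w i, p₁⟫ - Hi i p₁) atTop (𝓝 (⟪v, p₁⟫ - Hl p₁)) :=
      (hw.inner tendsto_const_nhds).sub (hpoint p₁)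
    have hev : ∀ᶠ i in atTop, cr < ⟪w i, p₁⟫ - Hi i p₁ :=
      htd.eventually (eventually_gt_nhds hcr2')
    filter_upwards [hev] with i hi
    calc b < (cr : EReal) := hcr1
      _ ≤ ((⟪w i, p₁⟫ - Hi i p₁ : ℝ) : EReal) := by exact_mod_cast hi.le
      _ ≤ _ := le_iSup (fun p : Eucl n => ((⟪w i, p⟫ - Hi i p : ℝ) : EReal)) p₁
  by_cases htop : L = ⊤
  · refine ⟨fun _ => v, tendsto_const_nhds, ?_⟩
    rw [htop]
    apply tendsto_order.2
    constructor
    · intro b hb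
      exact hlower (fun _ => v) tendsto_const_nhds b (htop ▸ hb)
    · intro b hb
      exact absurd hb not_top_lt
  · have hbot : L ≠ ⊥ := by
      intro h
      have h2 : ((⟪v, (0:Eucl n)⟫ - Hl 0 : ℝ) : EReal) ≤ L :=
        le_iSup (fun p : Eucl n => ((⟪v, p⟫ - Hl p : ℝ) : EReal)) 0
      rw [h] at h2
      exact (EReal.coe_ne_bot _) (le_bot_iff.1 h2)
    set r : ℝ := L.toReal with hr
    have hLr : L = (r : EReal) := (EReal.coe_toReal htop hbot).symm
    have hrub : ∀ p : Eucl n, ⟪v, p⟫ - Hl p ≤ r := by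
      intro p
      have h2 : ((⟪v, p⟫ - Hl p : ℝ) : EReal) ≤ L :=
        le_iSup (fun p : Eucl n => ((⟪v, p⟫ - Hl p : ℝ) : EReal)) p
      rw [hLr] at h2
      exact_mod_cast h2
    obtain ⟨C₀, hC₀⟩ := (isCompact_closedBall (0:Eucl n) 1).exists_bound_of_continuousOn
      hcontl.continuousOn
    set A : ℝ := C₀ + 1 with hA
    have hAbound : ∀ q : Eucl n, ‖q‖ ≤ 1 → |Hl q| ≤ A - 1 := by
      intro q hq
      have := hC₀ q (mem_closedBall_zero_iff.2 hq)
      rw [Real.norm_eq_abs] at this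
      simp only [hA]; linarith
    have claim : ∀ k : ℕ, ∃ (N : ℕ) (u : ℕ → Eucl n), ∀ i, N ≤ i →
        ‖u i - v‖ ≤ 1/((k:ℝ)+1) ∧ ∀ p : Eucl n, ⟪u i, p⟫ - Hi i p ≤ r + 1/((k:ℝ)+1) := by
      intro k
      set ε : ℝ := 1/((k:ℝ)+1) with hε
      have hεpos : 0 < ε := by positivity
      have hε1 : ε ≤ 1 := by
        rw [hε]
        rw [div_le_one (by positivity)]
        simp
      set lam : ℝ := ε^2 / (2*(|r| + A + 1)) with hlam
      set ρ : ℝ := 1 + (2/lam) * (‖v‖ + 4*A + 2) with hρ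
      obtain ⟨N, hN⟩ := eventually_atTop.1 (hu ρ (min ε 1) (lt_min hεpos one_pos))
      have hex : ∀ i : ℕ, ∃ u : Eucl n, N ≤ i →
          (‖u - v‖ ≤ ε ∧ ∀ p : Eucl n, ⟪u, p⟫ - Hi i p ≤ r + ε) := by
        intro i
        by_cases hi : N ≤ i
        · obtain ⟨u, hu1, hu2⟩ := prox_step (Hi i) Hl v r ε A lam ρ hεpos hε1 (hconvi i)
            (hconti i) hAbound hrub hlam hρ (fun p hp => hN i hi p hp)
          exact ⟨u, fun _ => ⟨hu1, hu2⟩⟩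
        · exact ⟨v, fun h => absurd h hi⟩
      choose u hu' using hex
      exact ⟨N, u, fun i hi => hu' i hi⟩
    choose N₀ U hU using claim
    set N : ℕ → ℕ := fun k => (Finset.range (k+1)).sup N₀ + k with hN
    have hN₀le : ∀ k, N₀ k ≤ N k := fun k =>
      le_add_of_le_of_nonneg (Finset.le_sup (Finset.self_mem_range_succ k)) (Nat.zero_le k)
    have hNk : ∀ k, k ≤ N k := fun k => Nat.le_add_left k _
    set κ : ℕ → ℕ := fun i => Nat.findGreatest (fun k => N k ≤ i) i with hκ
    have hκ1 : ∀ i, N 0 ≤ i → N (κ i) ≤ i := by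
      intro i hi
      exact Nat.findGreatest_spec (P := fun k => N k ≤ i) (Nat.zero_le i) hi
    have hκ2 : ∀ k i, N k ≤ i → k ≤ κ i := fun k i h =>
      Nat.le_findGreatest ((hNk k).trans h) h
    have hκtend : Tendsto κ atTop atTop :=
      tendsto_atTop_atTop.2 fun k => ⟨N k, fun i hi => hκ2 k i hi⟩
    set vi : ℕ → Eucl n := fun i => U (κ i) i with hvi
    have hbound : Tendsto (fun i => 1/((κ i : ℝ)+1)) atTop (𝓝 0) :=
      tendsto_one_div_add_atTop_nhds_zero_nat.comp hκtend
    have hprop : ∀ᶠ i in atTop, ‖vi i - v‖ ≤ 1/((κ i : ℝ)+1) ∧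
        ∀ p : Eucl n, ⟪vi i, p⟫ - Hi i p ≤ r + 1/((κ i : ℝ)+1) := by
      filter_upwards [eventually_ge_atTop (N 0)] with i hi
      exact hU (κ i) i (le_trans (hN₀le (κ i)) (hκ1 i hi))
    have hvitend : Tendsto vi atTop (𝓝 v) := by
      rw [tendsto_iff_norm_sub_tendsto_zero]
      apply squeeze_zero' (Eventually.of_forall fun i => norm_nonneg _)
        (hprop.mono fun i hi => hi.1) hbound
    refine ⟨vi, hvitend, ?_⟩
    rw [hLr]
    apply tendsto_order.2
    constructor
    · intro b hb
      exact hlower vi hvitend b (by rw [hLr]; exact hb)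
    · intro b hb
      obtain ⟨br, hbr1, hbr2⟩ := EReal.exists_between_coe_real hb
      have hbr1' : r < br := by exact_mod_cast hbr1
      obtain ⟨k₀, hk₀⟩ := exists_nat_one_div_lt (show (0:ℝ) < br - r by linarith)
      filter_upwards [hprop, hκtend.eventually (eventually_ge_atTop k₀)] with i hpi hki
      have hmono : 1/((κ i : ℝ)+1) ≤ 1/((k₀ : ℝ)+1) := by
        apply one_div_le_one_div_of_le (by positivity)
        have : (k₀:ℝ) ≤ (κ i : ℝ) := by exact_mod_cast hki
        linarith
      have hsup : (⨆ p : Eucl n, ((⟪vi i, p⟫ - Hi i p : ℝ) : EReal)) ≤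
          ((r + 1/((κ i : ℝ)+1) : ℝ) : EReal) :=
        iSup_le fun p => EReal.coe_le_coe_iff.2 (hpi.2 p)
      calc (⨆ p : Eucl n, ((⟪vi i, p⟫ - Hi i p : ℝ) : EReal))
          ≤ ((r + 1/((κ i : ℝ)+1) : ℝ) : EReal) := hsup
        _ < (br : EReal) := by
            apply EReal.coe_lt_coe_iff.2
            linarith
        _ < b := hbr2


/-- Proposition 2.1 of the paper. Properties (L2)–(L6) of the Lagrangian
`L = LFT H` obtained from a Hamiltonian `H` satisfying (H1)–(H3), and additionally (H4),
respectively joint continuity of `H`. -/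
theorem lagrangian_properties (n : ℕ) (T : ℝ) (hT : 0 ≤ T)
    (H : ℝ → Eucl n → Eucl n → ℝ)
    (h1 : ∀ (x p : Eucl n), Measurable fun t => H t x p)
    (h2 : ∀ t ∈ Icc (0 : ℝ) T, Continuous fun q : Eucl n × Eucl n => H t q.1 q.2)
    (h3 : ∀ t ∈ Icc (0 : ℝ) T, ∀ x : Eucl n, ConvexOn ℝ univ (H t x)) :
    -- (L2) lower semicontinuity in (x,v)
    (∀ t ∈ Icc (0 : ℝ) T,
      LowerSemicontinuous fun q : Eucl n × Eucl n => LFT H t q.1 q.2) ∧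
    -- (L3) convexity and properness in v
    (∀ t ∈ Icc (0 : ℝ) T, ∀ x : Eucl n,
      EConvex (LFT H t x) ∧ EProper (LFT H t x)) ∧
    -- (L4)
    (∀ t ∈ Icc (0 : ℝ) T, ∀ (x v : Eucl n), ∀ xi : ℕ → Eucl n,
      Tendsto xi atTop (𝓝 x) →
      ∃ vi : ℕ → Eucl n, Tendsto vi atTop (𝓝 v) ∧
        Tendsto (fun i => LFT H t (xi i) (vi i)) atTop (𝓝 (LFT H t x v))) ∧
    -- (L5) under (H4)
    (∀ c : ℝ → ℝ, Measurable c → (∀ t, 0 ≤ c t) →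
      (∀ t ∈ Icc (0 : ℝ) T, ∀ (x p q : Eucl n),
        |H t x p - H t x q| ≤ c t * (1 + ‖x‖) * ‖p - q‖) →
      ∀ t ∈ Icc (0 : ℝ) T, ∀ (x v : Eucl n),
        c t * (1 + ‖x‖) < ‖v‖ → LFT H t x v = ⊤) ∧
    -- joint lower semicontinuity and (L6) under joint continuity of `H`
    (ContinuousOn (fun q : ℝ × Eucl n × Eucl n => H q.1 q.2.1 q.2.2)
        (Icc (0 : ℝ) T ×ˢ (univ : Set (Eucl n × Eucl n))) →
      LowerSemicontinuousOn (fun q : ℝ × Eucl n × Eucl n => LFT H q.1 q.2.1 q.2.2)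
        (Icc (0 : ℝ) T ×ˢ (univ : Set (Eucl n × Eucl n))) ∧
      ∀ t ∈ Icc (0 : ℝ) T, ∀ (x v : Eucl n), ∀ (ti : ℕ → ℝ) (xi : ℕ → Eucl n),
        (∀ i, ti i ∈ Icc (0 : ℝ) T) → Tendsto ti atTop (𝓝 t) → Tendsto xi atTop (𝓝 x) →
        ∃ vi : ℕ → Eucl n, Tendsto vi atTop (𝓝 v) ∧
          Tendsto (fun i => LFT H (ti i) (xi i) (vi i)) atTop (𝓝 (LFT H t x v))) := by
  have hcont1 : ∀ t ∈ Icc (0:ℝ) T, ∀ x : Eucl n, Continuous fun p : Eucl n => H t x p := by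
    intro t ht x
    exact (h2 t ht).comp (continuous_const.prodMk continuous_id)
  refine ⟨?_, ?_, ?_, ?_, ?_⟩
  · -- (L2)
    intro t ht
    have key : ∀ p : Eucl n, LowerSemicontinuous
        fun q : Eucl n × Eucl n => ((⟪q.2, p⟫ - H t q.1 p : ℝ) : EReal) := by
      intro p
      apply Continuous.lowerSemicontinuous
      apply continuous_coe_real_ereal.comp
      exact (continuous_snd.inner continuous_const).sub
        ((h2 t ht).comp (continuous_fst.prodMk continuous_const))
    exact lowerSemicontinuous_iSup key
  · -- (L3)
    intro t ht x
    constructor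
    · intro v u a b ha hb hab
      rcases eq_or_lt_of_le ha with ha0 | hapos
      · have hb1 : b = 1 := by linarith
        rw [← ha0, hb1]
        simp only [zero_smul, one_smul, zero_add, EReal.coe_zero, EReal.coe_one, zero_mul,
          one_mul]
        exact le_rfl
      rcases eq_or_lt_of_le hb with hb0 | hbpos
      · have ha1 : a = 1 := by linarith
        rw [← hb0, ha1]
        simp only [zero_smul, one_smul, add_zero, EReal.coe_zero, EReal.coe_one, zero_mul,
          one_mul]
        exact le_rfl
      apply iSup_le
      intro p
      have hkey : ⟪a • v + b • u, p⟫ - H t x p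
          = a * (⟪v,p⟫ - H t x p) + b * (⟪u,p⟫ - H t x p) := by
        rw [inner_add_left, real_inner_smul_left, real_inner_smul_left]
        linear_combination (H t x p) * hab
      rw [hkey, EReal.coe_add, EReal.coe_mul, EReal.coe_mul]
      apply add_le_add
      · exact mul_le_mul_of_nonneg_left
          (le_iSup (fun p : Eucl n => ((⟪v,p⟫ - H t x p : ℝ) : EReal)) p)
          (by exact_mod_cast ha)
      · exact mul_le_mul_of_nonneg_left
          (le_iSup (fun p : Eucl n => ((⟪u,p⟫ - H t x p : ℝ) : EReal)) p)
          (by exact_mod_cast hb)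
    · constructor
      · intro v hbot
        have h4 : ((⟪v, (0:Eucl n)⟫ - H t x 0 : ℝ) : EReal) ≤ LFT H t x v :=
          le_iSup (fun p : Eucl n => ((⟪v,p⟫ - H t x p : ℝ) : EReal)) 0
        rw [hbot] at h4
        exact (EReal.coe_ne_bot _) (le_bot_iff.1 h4)
      · obtain ⟨w, C, hwC⟩ := exists_minorant (h3 t ht x) (hcont1 t ht x)
        refine ⟨w, ?_⟩
        have h4 : LFT H t x w ≤ (C : EReal) :=
          iSup_le fun p => EReal.coe_le_coe_iff.2 (hwC p)
        exact ne_top_of_le_ne_top (EReal.coe_ne_top C) h4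
  · -- (L4)
    intro t ht x v xi hxi
    have hGcont : ContinuousOn (fun q : Eucl n × Eucl n => H t q.1 q.2)
        ((univ : Set (Eucl n)) ×ˢ (univ : Set (Eucl n))) := (h2 t ht).continuousOn
    have hu := unif_close (fun x' p => H t x' p) univ hGcont x xi (mem_univ _)
      (fun _ => mem_univ _) hxi
    obtain ⟨vi, hv1, hv2⟩ := lft_seq (fun i => H t (xi i)) (H t x)
      (fun i => h3 t ht (xi i)) (fun i => hcont1 t ht (xi i)) (hcont1 t ht x) hu v
    exact ⟨vi, hv1, hv2⟩
  · -- (L5)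
    intro c hc hcnn hlip t ht x v hv
    have hgap : 0 < ‖v‖ - c t * (1 + ‖x‖) := by linarith
    have hvpos : 0 < ‖v‖ :=
      lt_of_le_of_lt (mul_nonneg (hcnn t) (by linarith [norm_nonneg x])) hv
    show (⨆ p : Eucl n, ((⟪v, p⟫ - H t x p : ℝ) : EReal)) = ⊤
    rw [iSup_eq_top]
    intro b hb
    obtain ⟨M, hbM, _⟩ := EReal.exists_between_coe_real hb
    set s : ℝ := max 0 ((M + H t x 0 + 1) / (‖v‖ - c t * (1 + ‖x‖))) with hs
    have hs0 : 0 ≤ s := le_max_left _ _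
    have hsgap : M + H t x 0 + 1 ≤ s * (‖v‖ - c t * (1 + ‖x‖)) := by
      rcases le_or_gt 0 ((M + H t x 0 + 1) / (‖v‖ - c t * (1 + ‖x‖))) with hq | hq
      · have : s = max 0 _ := hs
        have h5 : (M + H t x 0 + 1) / (‖v‖ - c t * (1 + ‖x‖)) ≤ s := le_max_right _ _
        have := mul_le_mul_of_nonneg_right h5 hgap.le
        rwa [div_mul_cancel₀ _ hgap.ne'] at this
      · have h5 : M + H t x 0 + 1 < 0 := by
          by_contra hcon
          push_neg at hcon
          exact absurd (div_nonneg hcon hgap.le) (not_le.2 hq)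
        nlinarith
    refine ⟨(s / ‖v‖) • v, ?_⟩
    have hip : ⟪v, (s / ‖v‖) • v⟫ = s * ‖v‖ := by
      rw [real_inner_smul_right, real_inner_self_eq_norm_sq]
      field_simp
    have hnp : ‖(s / ‖v‖) • v‖ = s := by
      rw [norm_smul, Real.norm_eq_abs, abs_of_nonneg (div_nonneg hs0 hvpos.le)]
      field_simp
    have hHb : H t x ((s / ‖v‖) • v) ≤ H t x 0 + c t * (1 + ‖x‖) * s := by
      have := hlip t ht x ((s / ‖v‖) • v) 0
      rw [sub_zero, hnp] at this
      linarith [(abs_le.1 this).2]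
    have hterm : M < ⟪v, (s / ‖v‖) • v⟫ - H t x ((s / ‖v‖) • v) := by
      rw [hip]
      nlinarith
    calc b < (M : EReal) := hbM
      _ < _ := EReal.coe_lt_coe_iff.2 hterm
  · -- joint part
    intro hcont
    constructor
    · have key : ∀ p : Eucl n, LowerSemicontinuousOn
          (fun q : ℝ × Eucl n × Eucl n => ((⟪q.2.2, p⟫ - H q.1 q.2.1 p : ℝ) : EReal))
          (Icc (0:ℝ) T ×ˢ (univ : Set (Eucl n × Eucl n))) := by
        intro p
        apply ContinuousOn.lowerSemicontinuousOn
        apply continuous_coe_real_ereal.comp_continuousOn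
        apply ContinuousOn.sub
        · exact ((continuous_snd.snd.inner continuous_const)).continuousOn
        · exact hcont.comp
            ((continuous_fst.prodMk (continuous_snd.fst.prodMk continuous_const)).continuousOn)
            (fun q hq => ⟨hq.1, mem_univ _⟩)
      exact lowerSemicontinuousOn_iSup key
    · intro t ht x v ti xi hti htit hxit
      have hGcont : ContinuousOn
          (fun q : (ℝ × Eucl n) × Eucl n => H q.1.1 q.1.2 q.2)
          ((Icc (0:ℝ) T ×ˢ (univ : Set (Eucl n))) ×ˢ (univ : Set (Eucl n))) := by
        apply hcont.comp
          ((continuous_fst.fst.prodMk (continuous_fst.snd.prodMk continuous_snd)).continuousOn)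
        intro q hq
        exact ⟨hq.1.1, mem_univ _⟩
      have hu := unif_close (fun z : ℝ × Eucl n => fun p => H z.1 z.2 p)
        (Icc (0:ℝ) T ×ˢ (univ : Set (Eucl n))) hGcont (t, x) (fun i => (ti i, xi i))
        ⟨ht, mem_univ x⟩ (fun i => ⟨hti i, mem_univ _⟩) (htit.prodMk_nhds hxit)
      obtain ⟨vi, hv1, hv2⟩ := lft_seq (fun i => H (ti i) (xi i)) (H t x)
        (fun i => h3 (ti i) (hti i) (xi i)) (fun i => hcont1 (ti i) (hti i) (xi i))
        (hcont1 t ht x) hu v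
      exact ⟨vi, hv1, hv2⟩
end
end

section
/- Suppose that p ↦ H(t,x,p) is finite and convex for every (t,x) ∈ [0,T]×ℝⁿ, and let L(t,x,·) = H*(t,x,·) and H(t,x,·) = L*(t,x,·) (Legendre–Fenchel conjugates). Then the following three conditions are equivalent, with the same functions k_R(·), w_R(·,·) and null set N_R: (HLC) for every R > 0 there exist a measurable k_R : [0,T] → [0,∞), a modulus w_R, and a null set N_R such that |H(t,x,p) − H(t,y,p)| ≤ k_R(t)|p||x−y| + w_R(t,|x−y|) for all t ∈ [0,T]\N_R, x,y ∈ B_R, p ∈ ℝⁿ; (LLC) for every R > 0 there exist such k_R, w_R, N_R with: for all t ∈ [0,T]\N_R, x,y ∈ B_R, and every v ∈ dom L(t,x,·) there exists u ∈ dom L(t,y,·) with |u−v| ≤ k_R(t)|y−x| and L(t,y,u) ≤ L(t,x,v) + w_R(t,|x−y|); (MLC) for every R > 0 there exist such k_R, w_R, N_R with E_L(t,x) ⊂ E_L(t,y) + (k_R(t)|x−y| B)×(w_R(t,|x−y|)[−1,1]) for all t ∈ [0,T]\N_R and x,y ∈ B_R. -/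
open Filter Topology MeasureTheory Set Metric
open scoped RealInnerProductSpace Pointwise

noncomputable section

section Aux

variable {n : ℕ}

/-- Legendre–Fenchel transform of a single function. -/
def lft (f : Eucl n → ℝ) (v : Eucl n) : EReal :=
  ⨆ p : Eucl n, ((⟪v, p⟫ - f p : ℝ) : EReal)

lemma LFT_eq (H : ℝ → Eucl n → Eucl n → ℝ) (t : ℝ) (x v : Eucl n) :
    LFT H t x v = lft (H t x) v := rfl

lemma le_lft (f : Eucl n → ℝ) (v p : Eucl n) :
    ((⟪v, p⟫ - f p : ℝ) : EReal) ≤ lft f v :=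
  le_iSup (fun p => ((⟪v, p⟫ - f p : ℝ) : EReal)) p

lemma lft_ne_bot (f : Eucl n → ℝ) (v : Eucl n) : lft f v ≠ ⊥ := by
  intro h
  have h2 := le_lft f v 0
  rw [h, le_bot_iff] at h2
  exact EReal.coe_ne_bot _ h2

lemma lft_le_coe_iff (f : Eucl n → ℝ) (v : Eucl n) (c : ℝ) :
    lft f v ≤ (c : EReal) ↔ ∀ p, ⟪v, p⟫ - f p ≤ c := by
  rw [lft, iSup_le_iff]
  exact forall_congr' fun p => EReal.coe_le_coe_iff

/-- Existence of a subgradient for a finite convex function on `Eucl n`. -/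
lemma exists_subgradient {f : Eucl n → ℝ} (hf : ConvexOn ℝ univ f) (p : Eucl n) :
    ∃ v : Eucl n, ∀ q : Eucl n, ⟪v, q⟫ - f q ≤ ⟪v, p⟫ - f p := by
  have hcont : Continuous f := hf.locallyLipschitz.continuous
  set S : Set (Eucl n × ℝ) := {q | f q.1 < q.2} with hSdef
  have hopen : IsOpen S := isOpen_lt (hcont.comp continuous_fst) continuous_snd
  have hconvS : Convex ℝ S := by
    rintro a ha b hb s t hs ht hst
    simp only [hSdef, mem_setOf_eq] at ha hb ⊢
    have h1 := hf.2 (mem_univ a.1) (mem_univ b.1) hs ht hst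
    have h2 : (s • a + t • b).1 = s • a.1 + t • b.1 := rfl
    have h3 : (s • a + t • b).2 = s * a.2 + t * b.2 := rfl
    rw [h2, h3]
    rcases hs.eq_or_lt with hs' | hs'
    · have ht1 : t = 1 := by linarith
      refine lt_of_le_of_lt h1 ?_
      rw [← hs', ht1]
      simpa using hb
    · have ha' : s * f a.1 < s * a.2 := by
        exact (mul_lt_mul_iff_right₀ hs').2 ha
      have hb' : t * f b.1 ≤ t * b.2 := mul_le_mul_of_nonneg_left hb.le ht
      refine lt_of_le_of_lt h1 ?_
      simp only [smul_eq_mul] at ha' hb' ⊢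
      linarith
  have hps : ((p, f p) : Eucl n × ℝ) ∉ S := by simp [hSdef]
  obtain ⟨φ, hφ⟩ := geometric_hahn_banach_open_point hconvS hopen hps
  set s₀ : ℝ := φ (0, 1) with hs₀def
  set q₀ : Eucl n := (InnerProductSpace.toDual ℝ (Eucl n)).symm
      (φ.comp (ContinuousLinearMap.inl ℝ (Eucl n) ℝ)) with hq₀def
  have hdecomp : ∀ (u : Eucl n) (μ : ℝ), φ (u, μ) = ⟪q₀, u⟫ + μ * s₀ := by
    intro u μ
    have h1 : ((u, μ) : Eucl n × ℝ) = (u, 0) + μ • ((0 : Eucl n), (1 : ℝ)) := by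
      simp [Prod.ext_iff]
    rw [h1, map_add, φ.map_smul]
    have h2 : ⟪q₀, u⟫ = φ (u, 0) := by
      rw [hq₀def, InnerProductSpace.toDual_symm_apply]
      rfl
    rw [h2, smul_eq_mul, hs₀def]
  have hs₀neg : s₀ < 0 := by
    have h := hφ (p, f p + 1) (by simp [hSdef])
    rw [hdecomp, hdecomp] at h
    linarith
  have hs₀ne : s₀ ≠ 0 := ne_of_lt hs₀neg
  have hmain : ∀ q : Eucl n, ⟪q₀, q⟫ + f q * s₀ ≤ ⟪q₀, p⟫ + f p * s₀ := by
    intro q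
    by_contra hcon
    push_neg at hcon
    set d : ℝ := ⟪q₀, q⟫ + f q * s₀ - (⟪q₀, p⟫ + f p * s₀) with hd
    have hd0 : 0 < d := by simp only [hd]; linarith
    have hns : 0 < -s₀ := neg_pos.2 hs₀neg
    have hε : 0 < d / (-s₀) / 2 := div_pos (div_pos hd0 hns) two_pos
    have h := hφ (q, f q + d / (-s₀) / 2) (by simp [hSdef]; linarith)
    rw [hdecomp, hdecomp] at h
    have hx : d / (-s₀) / 2 * s₀ = -(d / 2) := by
      rw [div_div, div_mul_eq_mul_div, div_eq_iff (by simp [hs₀ne] : (-s₀ * 2 : ℝ) ≠ 0)]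
      ring
    have he : (f q + d / (-s₀) / 2) * s₀ = f q * s₀ - d / 2 := by
      rw [add_mul, hx]; ring
    rw [he] at h
    simp only [hd] at h
    linarith
  refine ⟨(-s₀)⁻¹ • q₀, fun q => ?_⟩
  have h := hmain q
  rw [real_inner_smul_left, real_inner_smul_left]
  have hpos : 0 < (-s₀)⁻¹ := inv_pos.2 (neg_pos.2 hs₀neg)
  have h2 := mul_le_mul_of_nonneg_left h hpos.le
  have hx : (-s₀)⁻¹ * s₀ = -1 := by
    have h3 : (-s₀)⁻¹ * (-s₀) = 1 := inv_mul_cancel₀ (neg_ne_zero.2 hs₀ne)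
    linarith
  have e1 : ∀ a b : ℝ, (-s₀)⁻¹ * (a + b * s₀) = (-s₀)⁻¹ * a - b := by
    intro a b
    calc (-s₀)⁻¹ * (a + b * s₀) = (-s₀)⁻¹ * a + ((-s₀)⁻¹ * s₀) * b := by ring
      _ = (-s₀)⁻¹ * a - b := by rw [hx]; ring
  rw [e1, e1] at h2
  exact h2

lemma exists_lft_le {f : Eucl n → ℝ} (hf : ConvexOn ℝ univ f) (p : Eucl n) :
    ∃ v : Eucl n, lft f v ≤ ((⟪v, p⟫ - f p : ℝ) : EReal) := by
  obtain ⟨v, hv⟩ := exists_subgradient hf p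
  exact ⟨v, (lft_le_coe_iff f v _).2 hv⟩

lemma epi_closed (g : Eucl n → ℝ) :
    IsClosed {q : Eucl n × ℝ | lft g q.1 ≤ (q.2 : EReal)} := by
  have h : {q : Eucl n × ℝ | lft g q.1 ≤ (q.2 : EReal)} =
      ⋂ p : Eucl n, {q : Eucl n × ℝ | ⟪q.1, p⟫ - g p ≤ q.2} := by
    ext q
    simp only [mem_iInter, mem_setOf_eq]
    exact lft_le_coe_iff g q.1 q.2
  rw [h]
  exact isClosed_iInter fun p =>
    isClosed_le ((continuous_fst.inner continuous_const).sub continuous_const) continuous_snd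

lemma epi_convex (g : Eucl n → ℝ) :
    Convex ℝ {q : Eucl n × ℝ | lft g q.1 ≤ (q.2 : EReal)} := by
  rintro a ha b hb s t hs ht hst
  simp only [mem_setOf_eq] at ha hb ⊢
  have h2 : (s • a + t • b).1 = s • a.1 + t • b.1 := rfl
  have h3 : (s • a + t • b).2 = s * a.2 + t * b.2 := rfl
  rw [h2, h3]
  refine (lft_le_coe_iff _ _ _).2 fun p => ?_
  have ha' := (lft_le_coe_iff g a.1 a.2).1 ha p
  have hb' := (lft_le_coe_iff g b.1 b.2).1 hb p
  rw [inner_add_left, real_inner_smul_left, real_inner_smul_left]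
  have h4 : s * (⟪a.1, p⟫ - g p) ≤ s * a.2 := mul_le_mul_of_nonneg_left ha' hs
  have h5 : t * (⟪b.1, p⟫ - g p) ≤ t * b.2 := mul_le_mul_of_nonneg_left hb' ht
  have h6 : s * g p + t * g p = g p := by rw [← add_mul, hst, one_mul]
  nlinarith

set_option maxHeartbeats 1000000 in
/-- The key separation lemma: from the one-sided Hamiltonian bound, nearby points of the
domain of the transformed function exist. -/
lemma key {f g : Eucl n → ℝ} (hg : ConvexOn ℝ univ g)
    (r w : ℝ) (hr : 0 ≤ r) (hw : 0 ≤ w)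
    (hfg : ∀ p : Eucl n, f p - g p ≤ r * ‖p‖ + w)
    (v : Eucl n) (hv : lft f v ≠ ⊤) :
    ∃ u : Eucl n, ‖u - v‖ ≤ r ∧ lft g u ≤ lft f v + (w : EReal) := by
  set ρ : ℝ := (lft f v).toReal with hρdef
  have hcoe : lft f v = (ρ : EReal) := (EReal.coe_toReal hv (lft_ne_bot f v)).symm
  set η : ℝ := ρ + w with hηdef
  have hsum : lft f v + (w : EReal) = (η : EReal) := by rw [hcoe, ← EReal.coe_add]
  by_contra hcon
  push_neg at hcon
  have hcon' : ∀ u : Eucl n, ‖u - v‖ ≤ r → (η : EReal) < lft g u := by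
    intro u hu
    rw [← hsum]
    exact hcon u hu
  set S : Set (Eucl n × ℝ) := {q | lft g q.1 ≤ (q.2 : EReal)} with hSdef
  set K : Set (Eucl n × ℝ) := closedBall v r ×ˢ ({η} : Set ℝ) with hKdef
  have hdisj : Disjoint S K := by
    rw [Set.disjoint_left]
    rintro ⟨u, μ⟩ hqS hqK
    simp only [hKdef, mem_prod, mem_closedBall, mem_singleton_iff] at hqK
    obtain ⟨hu, rfl⟩ := hqK
    rw [dist_eq_norm] at hu
    simp only [hSdef, mem_setOf_eq] at hqS
    exact absurd hqS (not_le.2 (hcon' u hu))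
  obtain ⟨φ, u₁, u₂, hSle, h12, hKlt⟩ :=
    geometric_hahn_banach_closed_compact (epi_convex g) (epi_closed g)
      ((convex_closedBall v r).prod (convex_singleton η))
      ((isCompact_closedBall v r).prod isCompact_singleton) hdisj
  set s₀ : ℝ := φ (0, 1) with hs₀def
  set q₀ : Eucl n := (InnerProductSpace.toDual ℝ (Eucl n)).symm
      (φ.comp (ContinuousLinearMap.inl ℝ (Eucl n) ℝ)) with hq₀def
  have hdecomp : ∀ (u : Eucl n) (μ : ℝ), φ (u, μ) = ⟪q₀, u⟫ + μ * s₀ := by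
    intro u μ
    have h1 : ((u, μ) : Eucl n × ℝ) = (u, 0) + μ • ((0 : Eucl n), (1 : ℝ)) := by
      simp [Prod.ext_iff]
    rw [h1, map_add, φ.map_smul]
    have h2 : ⟪q₀, u⟫ = φ (u, 0) := by
      rw [hq₀def, InnerProductSpace.toDual_symm_apply]
      rfl
    rw [h2, smul_eq_mul, hs₀def]
  have hSfact : ∀ u : Eucl n, ∀ c : ℝ, lft g u ≤ (c : EReal) → ⟪q₀, u⟫ + c * s₀ < u₁ := by
    intro u c hc
    have h := hSle (u, c) hc
    rwa [hdecomp] at h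
  -- s₀ ≤ 0
  have hs₀le : s₀ ≤ 0 := by
    by_contra hpos
    push_neg at hpos
    obtain ⟨v₀, hv₀⟩ := exists_lft_le hg 0
    set c₀ : ℝ := ⟪v₀, (0 : Eucl n)⟫ - g 0 with hc₀
    set c₁ : ℝ := max c₀ ((u₁ - ⟪q₀, v₀⟫) / s₀) with hc₁
    have hmemS : lft g v₀ ≤ (c₁ : EReal) :=
      le_trans hv₀ (EReal.coe_le_coe_iff.2 (le_max_left _ _))
    have h := hSfact v₀ c₁ hmemS
    have h2 : (u₁ - ⟪q₀, v₀⟫) / s₀ ≤ c₁ := le_max_right _ _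
    have h3 : (u₁ - ⟪q₀, v₀⟫) / s₀ * s₀ ≤ c₁ * s₀ := mul_le_mul_of_nonneg_right h2 hpos.le
    rw [div_mul_cancel₀ _ (ne_of_gt hpos)] at h3
    linarith
  -- K side
  have hKfact : u₂ < ⟪q₀, v⟫ - r * ‖q₀‖ + η * s₀ := by
    by_cases hq : q₀ = 0
    · have hmem : ((v, η) : Eucl n × ℝ) ∈ K := by
        refine ⟨mem_closedBall_self hr, rfl⟩
      have h := hKlt _ hmem
      rw [hdecomp] at h
      simpa [hq] using h
    · have hq' : 0 < ‖q₀‖ := norm_pos_iff.2 hq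
      have hnc : ‖(-(r / ‖q₀‖)) • q₀‖ = r := by
        rw [norm_smul, Real.norm_eq_abs, abs_neg, abs_of_nonneg (div_nonneg hr hq'.le),
          div_mul_cancel₀ _ hq'.ne']
      have hmem : ((v + (-(r / ‖q₀‖)) • q₀, η) : Eucl n × ℝ) ∈ K := by
        refine ⟨?_, rfl⟩
        rw [mem_closedBall, dist_eq_norm]
        simp only [add_sub_cancel_left]
        rw [hnc]
      have h := hKlt _ hmem
      rw [hdecomp] at h
      have hinner : ⟪q₀, v + (-(r / ‖q₀‖)) • q₀⟫ = ⟪q₀, v⟫ - r * ‖q₀‖ := by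
        rw [inner_add_right, real_inner_smul_right, real_inner_self_eq_norm_sq]
        have hdm : r / ‖q₀‖ * ‖q₀‖ = r := div_mul_cancel₀ _ hq'.ne'
        calc ⟪q₀, v⟫ + -(r / ‖q₀‖) * ‖q₀‖ ^ 2
            = ⟪q₀, v⟫ - (r / ‖q₀‖ * ‖q₀‖) * ‖q₀‖ := by ring
          _ = ⟪q₀, v⟫ - r * ‖q₀‖ := by rw [hdm]
      rw [hinner] at h
      exact h
  rcases lt_or_eq_of_le hs₀le with hneg | hzero
  · -- s₀ < 0
    set lam : ℝ := -s₀ with hlamdef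
    have hlam0 : 0 < lam := by rw [hlamdef]; linarith
    set q' : Eucl n := lam⁻¹ • q₀ with hq'def
    have hq₀eq : q₀ = lam • q' := by
      rw [hq'def, smul_smul, mul_inv_cancel₀ hlam0.ne', one_smul]
    obtain ⟨v', hv'⟩ := exists_lft_le hg q'
    have hS' := hSfact v' _ hv'
    have hA : ⟪q₀, v'⟫ = lam * ⟪q', v'⟫ := by rw [hq₀eq, real_inner_smul_left]
    have hA2 : ⟪v', q'⟫ = ⟪q', v'⟫ := real_inner_comm _ _
    have hs₀lam : s₀ = -lam := by rw [hlamdef, neg_neg]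
    have hgq' : lam * g q' < u₁ := by
      rw [hA, hA2, hs₀lam] at hS'
      nlinarith [hS']
    have hKv : ⟪q₀, v⟫ = lam * ⟪q', v⟫ := by rw [hq₀eq, real_inner_smul_left]
    have hKn : ‖q₀‖ = lam * ‖q'‖ := by
      rw [hq₀eq, norm_smul, Real.norm_eq_abs, abs_of_pos hlam0]
    have hK2 : u₂ < lam * (⟪q', v⟫ - r * ‖q'‖ - η) := by
      rw [hKv, hKn, hs₀lam] at hKfact
      nlinarith [hKfact]
    have hfgq := hfg q'
    have hlb : ((⟪v, q'⟫ - f q' : ℝ) : EReal) ≤ lft f v := le_lft f v q'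
    have hlb' : ⟪v, q'⟫ - f q' ≤ ρ := by
      rw [hcoe] at hlb
      exact EReal.coe_le_coe_iff.1 hlb
    have hcm : ⟪q', v⟫ = ⟪v, q'⟫ := real_inner_comm _ _
    -- ⟪q',v⟫ - r‖q'‖ - η ≤ g q'
    have hchain : ⟪q', v⟫ - r * ‖q'‖ - η ≤ g q' := by
      rw [hcm, hηdef]
      linarith
    nlinarith [mul_le_mul_of_nonneg_left hchain hlam0.le]
  · -- s₀ = 0
    have hKf : u₂ < ⟪q₀, v⟫ - r * ‖q₀‖ := by
      rw [hzero, mul_zero, add_zero] at hKfact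
      exact hKfact
    have hgrow : ∀ μ : ℝ, 0 ≤ μ → g (μ • q₀) ≤ μ * u₁ + g 0 := by
      intro μ hμ
      obtain ⟨v', hv'⟩ := exists_lft_le hg (μ • q₀)
      have h1 := hSfact v' _ hv'
      rw [hzero, mul_zero, add_zero] at h1
      have h2 : ((⟪v', (0 : Eucl n)⟫ - g 0 : ℝ) : EReal) ≤ lft g v' := le_lft g v' 0
      have h3 : ⟪v', (0 : Eucl n)⟫ - g 0 ≤ ⟪v', μ • q₀⟫ - g (μ • q₀) :=
        EReal.coe_le_coe_iff.1 (le_trans h2 hv')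
      have h3' : -(g 0) ≤ ⟪v', μ • q₀⟫ - g (μ • q₀) := by
        simpa using h3
      have h4 : ⟪v', μ • q₀⟫ = μ * ⟪q₀, v'⟫ := by
        rw [real_inner_smul_right, real_inner_comm]
      rw [h4] at h3'
      linarith [mul_le_mul_of_nonneg_left h1.le hμ]
    set δ : ℝ := u₂ - u₁ with hδdef
    have hδ0 : 0 < δ := by rw [hδdef]; linarith
    set μ : ℝ := max 1 ((ρ + g 0 + w + 1) / δ) with hμdef
    have hμ1 : (1 : ℝ) ≤ μ := le_max_left _ _
    have hμ0 : 0 ≤ μ := by linarith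
    have hμδ : ρ + g 0 + w + 1 ≤ μ * δ := by
      have h := le_max_right 1 ((ρ + g 0 + w + 1) / δ)
      calc ρ + g 0 + w + 1 = (ρ + g 0 + w + 1) / δ * δ := (div_mul_cancel₀ _ hδ0.ne').symm
        _ ≤ μ * δ := mul_le_mul_of_nonneg_right h hδ0.le
    have hlb : ((⟪v, μ • q₀⟫ - f (μ • q₀) : ℝ) : EReal) ≤ lft f v := le_lft f v _
    have hlb' : ⟪v, μ • q₀⟫ - f (μ • q₀) ≤ ρ := by
      rw [hcoe] at hlb
      exact EReal.coe_le_coe_iff.1 hlb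
    have hfgμ := hfg (μ • q₀)
    have hnorm : ‖μ • q₀‖ = μ * ‖q₀‖ := by
      rw [norm_smul, Real.norm_eq_abs, abs_of_nonneg hμ0]
    have hgμ := hgrow μ hμ0
    have hip : ⟪v, μ • q₀⟫ = μ * ⟪q₀, v⟫ := by
      rw [real_inner_smul_right, real_inner_comm]
    rw [hip] at hlb'
    rw [hnorm] at hfgμ
    rw [hδdef] at hμδ
    have e1 : μ * (u₂ - u₁) = μ * u₂ - μ * u₁ := by ring
    have e2 : μ * (⟪q₀, v⟫ - r * ‖q₀‖) = μ * ⟪q₀, v⟫ - r * (μ * ‖q₀‖) := by ring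
    have h5 := mul_le_mul_of_nonneg_left hKf.le hμ0
    rw [e2] at h5
    rw [e1] at hμδ
    linarith

/-- One direction of (LLC) → (HLC). -/
lemma llc_dir {f g : Eucl n → ℝ} (hf : ConvexOn ℝ univ f) (K W : ℝ)
    (hllc : ∀ v : Eucl n, lft f v ≠ ⊤ →
      ∃ u : Eucl n, lft g u ≠ ⊤ ∧ ‖u - v‖ ≤ K ∧ lft g u ≤ lft f v + (W : EReal))
    (p : Eucl n) (hK : 0 ≤ K) : f p - g p ≤ K * ‖p‖ + W := by
  obtain ⟨v₀, hv₀⟩ := exists_lft_le hf p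
  have hv₀top : lft f v₀ ≠ ⊤ := ne_top_of_le_ne_top (EReal.coe_ne_top _) hv₀
  obtain ⟨u, hutop, hun, hule⟩ := hllc v₀ hv₀top
  set ρ : ℝ := (lft f v₀).toReal with hρdef
  set σ : ℝ := (lft g u).toReal with hσdef
  have hcoe : lft f v₀ = (ρ : EReal) := (EReal.coe_toReal hv₀top (lft_ne_bot f v₀)).symm
  have hρ : ρ ≤ ⟪v₀, p⟫ - f p := by
    have h := EReal.toReal_le_toReal hv₀ (lft_ne_bot f v₀) (EReal.coe_ne_top _)
    rwa [EReal.toReal_coe] at h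
  have hule' : lft g u ≤ ((ρ + W : ℝ) : EReal) := by
    rw [EReal.coe_add, ← hcoe]
    exact hule
  have hσρ : σ ≤ ρ + W := by
    have h := EReal.toReal_le_toReal hule' (lft_ne_bot g u) (EReal.coe_ne_top _)
    rwa [EReal.toReal_coe] at h
  have hup : ⟪u, p⟫ - g p ≤ σ := by
    have h := EReal.toReal_le_toReal (le_lft g u p) (EReal.coe_ne_bot _) hutop
    rwa [EReal.toReal_coe] at h
  have hcs : ⟪v₀ - u, p⟫ ≤ ‖v₀ - u‖ * ‖p‖ := real_inner_le_norm _ _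
  rw [inner_sub_left] at hcs
  have hn : ‖v₀ - u‖ ≤ K := by rw [norm_sub_rev]; exact hun
  have hn2 : ‖v₀ - u‖ * ‖p‖ ≤ K * ‖p‖ := mul_le_mul_of_nonneg_right hn (norm_nonneg p)
  linarith

end Aux

/-- Theorem 2.4 of the paper. For a Hamiltonian which is finite and
convex in its last variable, the three Lipschitz-type conditions (HLC), (LLC) and (MLC)
are equivalent, with the same function `k`, modulus `w` and null set `N`. -/
theorem hlc_iff_llc_iff_mlc (n : ℕ) (T : ℝ) (hT : 0 ≤ T)
    (H : ℝ → Eucl n → Eucl n → ℝ)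
    (hconv : ∀ t ∈ Icc (0 : ℝ) T, ∀ x : Eucl n, ConvexOn ℝ univ (H t x))
    (R : ℝ) (hR : 0 < R)
    (k : ℝ → ℝ) (hkm : Measurable k) (hk0 : ∀ t, 0 ≤ k t)
    (w : ℝ → ℝ → ℝ) (hw : IsModulus w)
    (N : Set ℝ) (hN : volume N = 0) :
    -- (HLC) ↔ (LLC)
    ((∀ t ∈ Icc (0 : ℝ) T \ N, ∀ x ∈ closedBall (0 : Eucl n) R,
        ∀ y ∈ closedBall (0 : Eucl n) R, ∀ p : Eucl n,
        |H t x p - H t y p| ≤ k t * ‖p‖ * ‖x - y‖ + w t ‖x - y‖) ↔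
      (∀ t ∈ Icc (0 : ℝ) T \ N, ∀ x ∈ closedBall (0 : Eucl n) R,
        ∀ y ∈ closedBall (0 : Eucl n) R, ∀ v : Eucl n, LFT H t x v ≠ ⊤ →
        ∃ u : Eucl n, LFT H t y u ≠ ⊤ ∧ ‖u - v‖ ≤ k t * ‖y - x‖ ∧
          LFT H t y u ≤ LFT H t x v + ((w t ‖x - y‖ : ℝ) : EReal))) ∧
    -- (LLC) ↔ (MLC)
    ((∀ t ∈ Icc (0 : ℝ) T \ N, ∀ x ∈ closedBall (0 : Eucl n) R,
        ∀ y ∈ closedBall (0 : Eucl n) R, ∀ v : Eucl n, LFT H t x v ≠ ⊤ →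
        ∃ u : Eucl n, LFT H t y u ≠ ⊤ ∧ ‖u - v‖ ≤ k t * ‖y - x‖ ∧
          LFT H t y u ≤ LFT H t x v + ((w t ‖x - y‖ : ℝ) : EReal)) ↔
      (∀ t ∈ Icc (0 : ℝ) T \ N, ∀ x ∈ closedBall (0 : Eucl n) R,
        ∀ y ∈ closedBall (0 : Eucl n) R,
        epiL H t x ⊆ epiL H t y +
          (closedBall (0 : Eucl n) (k t * ‖x - y‖)) ×ˢ Icc (-(w t ‖x - y‖)) (w t ‖x - y‖))) := by
  have hw0 : ∀ t r, 0 ≤ w t r := fun t r => (hw.2 t).1 r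
  refine ⟨⟨fun hhlc => ?_, fun hllc => ?_⟩, ⟨fun hllc => ?_, fun hmlc => ?_⟩⟩
  · -- (HLC) → (LLC)
    intro t ht x hx y hy v hv
    have hconvy : ConvexOn ℝ univ (H t y) := hconv t ht.1 y
    have hfg : ∀ p : Eucl n, H t x p - H t y p ≤ (k t * ‖x - y‖) * ‖p‖ + w t ‖x - y‖ := by
      intro p
      have h1 := hhlc t ht x hx y hy p
      calc H t x p - H t y p ≤ |H t x p - H t y p| := le_abs_self _
        _ ≤ k t * ‖p‖ * ‖x - y‖ + w t ‖x - y‖ := h1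
        _ = k t * ‖x - y‖ * ‖p‖ + w t ‖x - y‖ := by ring
    rw [LFT_eq] at hv
    obtain ⟨u, hur, hule⟩ := key hconvy (k t * ‖x - y‖) (w t ‖x - y‖)
      (mul_nonneg (hk0 t) (norm_nonneg _)) (hw0 t _) hfg v hv
    refine ⟨u, ?_, ?_, ?_⟩
    · rw [LFT_eq]
      have hcoe : lft (H t x) v = (((lft (H t x) v).toReal : ℝ) : EReal) :=
        (EReal.coe_toReal hv (lft_ne_bot _ _)).symm
      rw [hcoe, ← EReal.coe_add] at hule
      exact ne_top_of_le_ne_top (EReal.coe_ne_top _) hule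
    · calc ‖u - v‖ ≤ k t * ‖x - y‖ := hur
        _ = k t * ‖y - x‖ := by rw [norm_sub_rev]
    · rw [LFT_eq, LFT_eq]
      exact hule
  · -- (LLC) → (HLC)
    intro t ht x hx y hy p
    have hxy : ‖y - x‖ = ‖x - y‖ := norm_sub_rev _ _
    have h1 : H t x p - H t y p ≤ k t * ‖y - x‖ * ‖p‖ + w t ‖x - y‖ := by
      refine llc_dir (hconv t ht.1 x) _ _ ?_ p (mul_nonneg (hk0 t) (norm_nonneg _))
      intro v hv
      obtain ⟨u, ha, hb, hc⟩ := hllc t ht x hx y hy v hv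
      exact ⟨u, ha, hb, hc⟩
    have h2 : H t y p - H t x p ≤ k t * ‖x - y‖ * ‖p‖ + w t ‖y - x‖ := by
      refine llc_dir (hconv t ht.1 y) _ _ ?_ p (mul_nonneg (hk0 t) (norm_nonneg _))
      intro v hv
      obtain ⟨u, ha, hb, hc⟩ := hllc t ht y hy x hx v hv
      exact ⟨u, ha, hb, hc⟩
    rw [hxy] at h1 h2
    rw [abs_sub_le_iff]
    constructor
    · calc H t x p - H t y p ≤ k t * ‖x - y‖ * ‖p‖ + w t ‖x - y‖ := h1
        _ = k t * ‖p‖ * ‖x - y‖ + w t ‖x - y‖ := by ring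
    · calc H t y p - H t x p ≤ k t * ‖x - y‖ * ‖p‖ + w t ‖x - y‖ := h2
        _ = k t * ‖p‖ * ‖x - y‖ + w t ‖x - y‖ := by ring
  · -- (LLC) → (MLC)
    intro t ht x hx y hy
    rintro ⟨v, η⟩ hmem
    simp only [epiL, mem_setOf_eq] at hmem
    have hvtop : LFT H t x v ≠ ⊤ := ne_top_of_le_ne_top (EReal.coe_ne_top η) hmem
    obtain ⟨u, hutop, hun, hule⟩ := hllc t ht x hx y hy v hvtop
    rw [Set.mem_add]
    refine ⟨(u, η + w t ‖x - y‖), ?_, (v - u, -(w t ‖x - y‖)), ⟨?_, ?_⟩, ?_⟩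
    · show LFT H t y u ≤ ((η + w t ‖x - y‖ : ℝ) : EReal)
      calc LFT H t y u ≤ LFT H t x v + ((w t ‖x - y‖ : ℝ) : EReal) := hule
        _ ≤ (η : EReal) + ((w t ‖x - y‖ : ℝ) : EReal) := add_le_add_left hmem _
        _ = ((η + w t ‖x - y‖ : ℝ) : EReal) := (EReal.coe_add _ _).symm
    · rw [mem_closedBall, dist_eq_norm, sub_zero]
      calc ‖v - u‖ = ‖u - v‖ := norm_sub_rev _ _
        _ ≤ k t * ‖y - x‖ := hun
        _ = k t * ‖x - y‖ := by rw [norm_sub_rev]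
    · show -(w t ‖x - y‖) ∈ Icc (-(w t ‖x - y‖)) (w t ‖x - y‖)
      rw [mem_Icc]
      exact ⟨le_rfl, by linarith [hw0 t ‖x - y‖]⟩
    · simp only [Prod.mk_add_mk, Prod.mk.injEq]
      constructor <;> abel
  · -- (MLC) → (LLC)
    intro t ht x hx y hy v hv
    set ρ : ℝ := (LFT H t x v).toReal with hρdef
    have hbot : LFT H t x v ≠ ⊥ := lft_ne_bot (H t x) v
    have hcoe : LFT H t x v = (ρ : EReal) := (EReal.coe_toReal hv hbot).symm
    have hmem : ((v, ρ) : Eucl n × ℝ) ∈ epiL H t x := le_of_eq hcoe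
    obtain ⟨a, ha, b, hb, hab⟩ := Set.mem_add.1 (hmlc t ht x hx y hy hmem)
    obtain ⟨hb1, hb2⟩ := hb
    rw [mem_closedBall, dist_eq_norm, sub_zero] at hb1
    rw [mem_Icc] at hb2
    have h1 : a.1 + b.1 = v := congrArg Prod.fst hab
    have h2 : a.2 + b.2 = ρ := congrArg Prod.snd hab
    have haepi : LFT H t y a.1 ≤ (a.2 : EReal) := ha
    refine ⟨a.1, ne_top_of_le_ne_top (EReal.coe_ne_top a.2) haepi, ?_, ?_⟩
    · have h3 : a.1 - v = -b.1 := by rw [← h1]; abel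
      rw [h3, norm_neg]
      calc ‖b.1‖ ≤ k t * ‖x - y‖ := hb1
        _ = k t * ‖y - x‖ := by rw [norm_sub_rev]
    · calc LFT H t y a.1 ≤ (a.2 : EReal) := haepi
        _ ≤ ((ρ + w t ‖x - y‖ : ℝ) : EReal) := by
            rw [EReal.coe_le_coe_iff]
            linarith [hb2.1]
        _ = LFT H t x v + ((w t ‖x - y‖ : ℝ) : EReal) := by rw [EReal.coe_add, hcoe]
end
end

section
/- Fix t ∈ [0,T] and x,y ∈ ℝⁿ, and constants k ≥ 0 and w ≥ 0. Suppose p ↦ H(t,x,p) and p ↦ H(t,y,p) are proper, convex and lower semicontinuous, and let L(t,x,·) := H*(t,x,·) and L(t,y,·) := H*(t,y,·). Then the following are equivalent: (a) H(t,x,p) ≤ H(t,y,p) + k|p||x−y| + w for all p ∈ ℝⁿ; (b) for all v ∈ dom L(t,x,·) there exists u ∈ dom L(t,y,·) such that |u−v| ≤ k|x−y| and L(t,y,u) ≤ L(t,x,v) + w. -/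
open Filter Topology MeasureTheory Set Metric
open scoped RealInnerProductSpace Pointwise

noncomputable section

namespace FMaux

variable {n : ℕ}

lemma ereal_real {e : EReal} (h1 : e ≠ ⊥) (h2 : e ≠ ⊤) : ∃ m : ℝ, e = (m : EReal) :=
  ⟨e.toReal, (EReal.coe_toReal h2 h1).symm⟩

lemma le_eConj (φ : Eucl n → EReal) (v p : Eucl n) :
    ((⟪v, p⟫ : ℝ) : EReal) - φ p ≤ eConj φ v :=
  le_iSup (fun p => ((⟪v, p⟫ : ℝ) : EReal) - φ p) p

lemma eConj_ne_bot {φ : Eucl n → EReal} (h : EProper φ) (v : Eucl n) : eConj φ v ≠ ⊥ := by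
  obtain ⟨hb, p₀, ht⟩ := h
  obtain ⟨m, hm⟩ := ereal_real (hb p₀) ht
  have h1 := le_eConj φ v p₀
  rw [hm, ← EReal.coe_sub] at h1
  intro h0
  rw [h0, le_bot_iff] at h1
  exact EReal.coe_ne_bot _ h1

lemma eConj_le_coe {φ : Eucl n → EReal} {v : Eucl n} {β : ℝ}
    (hbot : ∀ q, φ q ≠ ⊥)
    (h : ∀ q (m : ℝ), φ q = (m : EReal) → ⟪v, q⟫ - m ≤ β) :
    eConj φ v ≤ (β : EReal) := by
  refine iSup_le fun q => ?_
  rcases eq_or_ne (φ q) ⊤ with ht | ht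
  · rw [ht, EReal.sub_top]; exact bot_le
  · obtain ⟨m, hm⟩ := ereal_real (hbot q) ht
    rw [hm, ← EReal.coe_sub, EReal.coe_le_coe_iff]
    exact h q m hm

lemma sub_le_of_eConj_le {φ : Eucl n → EReal} {v : Eucl n} {β : ℝ} {q : Eucl n} {m : ℝ}
    (h : eConj φ v ≤ (β : EReal)) (hm : φ q = (m : EReal)) : ⟪v, q⟫ - m ≤ β := by
  have h1 := le_eConj φ v q
  rw [hm, ← EReal.coe_sub] at h1
  exact EReal.coe_le_coe_iff.mp (h1.trans h)

def epiSet (φ : Eucl n → EReal) : Set (Eucl n × ℝ) := {z | φ z.1 ≤ (z.2 : EReal)}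

lemma convex_epiSet {φ : Eucl n → EReal} (hb : ∀ q, φ q ≠ ⊥) (hc : EConvex φ) :
    Convex ℝ (epiSet φ) := by
  rintro ⟨v₁, r₁⟩ h₁ ⟨v₂, r₂⟩ h₂ a b ha hb' hab
  have hne₁ : φ v₁ ≠ ⊤ := fun ht => EReal.coe_ne_top r₁ (top_le_iff.mp (ht ▸ h₁))
  have hne₂ : φ v₂ ≠ ⊤ := fun ht => EReal.coe_ne_top r₂ (top_le_iff.mp (ht ▸ h₂))
  obtain ⟨m₁, hm₁⟩ := ereal_real (hb v₁) hne₁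
  obtain ⟨m₂, hm₂⟩ := ereal_real (hb v₂) hne₂
  have hm₁' : m₁ ≤ r₁ := EReal.coe_le_coe_iff.mp (hm₁ ▸ h₁)
  have hm₂' : m₂ ≤ r₂ := EReal.coe_le_coe_iff.mp (hm₂ ▸ h₂)
  show φ (a • v₁ + b • v₂) ≤ ((a • r₁ + b • r₂ : ℝ) : EReal)
  calc φ (a • v₁ + b • v₂) ≤ (a : EReal) * φ v₁ + (b : EReal) * φ v₂ := hc v₁ v₂ a b ha hb' hab
    _ = ((a * m₁ + b * m₂ : ℝ) : EReal) := by
        rw [hm₁, hm₂, ← EReal.coe_mul, ← EReal.coe_mul, ← EReal.coe_add]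
    _ ≤ ((a • r₁ + b • r₂ : ℝ) : EReal) := by
        rw [EReal.coe_le_coe_iff, smul_eq_mul, smul_eq_mul]
        nlinarith [mul_le_mul_of_nonneg_left hm₁' ha, mul_le_mul_of_nonneg_left hm₂' hb']

lemma convex_epiSet_eConj {φ : Eucl n → EReal} (hb : ∀ q, φ q ≠ ⊥) :
    Convex ℝ (epiSet (eConj φ)) := by
  rintro ⟨v₁, r₁⟩ h₁ ⟨v₂, r₂⟩ h₂ a b ha hb' hab
  show eConj φ (a • v₁ + b • v₂) ≤ ((a • r₁ + b • r₂ : ℝ) : EReal)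
  refine eConj_le_coe hb fun q m hm => ?_
  have t₁ : ⟪v₁, q⟫ - m ≤ r₁ := sub_le_of_eConj_le h₁ hm
  have t₂ : ⟪v₂, q⟫ - m ≤ r₂ := sub_le_of_eConj_le h₂ hm
  have e : ⟪a • v₁ + b • v₂, q⟫ = a * ⟪v₁, q⟫ + b * ⟪v₂, q⟫ := by
    rw [inner_add_left, real_inner_smul_left, real_inner_smul_left]
  rw [e, smul_eq_mul, smul_eq_mul]
  have hmm : a * m + b * m = m := by rw [← add_mul, hab, one_mul]
  nlinarith [mul_le_mul_of_nonneg_left t₁ ha, mul_le_mul_of_nonneg_left t₂ hb']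

lemma closed_epiSet_eConj (φ : Eucl n → EReal) : IsClosed (epiSet (eConj φ)) := by
  have hrw : epiSet (eConj φ)
      = ⋂ p, {z : Eucl n × ℝ | ((⟪z.1, p⟫ : ℝ) : EReal) - φ p ≤ (z.2 : EReal)} := by
    ext z
    simp [epiSet, eConj, iSup_le_iff]
  rw [hrw]
  refine isClosed_iInter fun p => ?_
  rcases eq_or_ne (φ p) ⊤ with ht | ht
  · have : {z : Eucl n × ℝ | ((⟪z.1, p⟫ : ℝ) : EReal) - φ p ≤ (z.2 : EReal)} = univ := by
      ext z; simp [ht, EReal.sub_top]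
    rw [this]; exact isClosed_univ
  rcases eq_or_ne (φ p) ⊥ with hbt | hbt
  · have : {z : Eucl n × ℝ | ((⟪z.1, p⟫ : ℝ) : EReal) - φ p ≤ (z.2 : EReal)} = ∅ := by
      ext z; simp [hbt, EReal.coe_sub_bot, top_le_iff]
    rw [this]; exact isClosed_empty
  · obtain ⟨m, hm⟩ := ereal_real hbt ht
    have : {z : Eucl n × ℝ | ((⟪z.1, p⟫ : ℝ) : EReal) - φ p ≤ (z.2 : EReal)}
        = {z : Eucl n × ℝ | ⟪z.1, p⟫ - m ≤ z.2} := by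
      ext z
      rw [mem_setOf_eq, mem_setOf_eq, hm, ← EReal.coe_sub, EReal.coe_le_coe_iff]
    rw [this]
    exact isClosed_le ((continuous_fst.inner continuous_const).sub continuous_const)
      continuous_snd

lemma closed_epiSet_of_lsc {φ : Eucl n → EReal} (hl : LowerSemicontinuous φ) :
    IsClosed (epiSet φ) := by
  have h := hl.isClosed_epigraph
  have : epiSet φ = (fun z : Eucl n × ℝ => (z.1, (z.2 : EReal))) ⁻¹'
      {p : Eucl n × EReal | φ p.1 ≤ p.2} := rfl
  rw [this]
  exact h.preimage (continuous_fst.prodMk (continuous_coe_real_ereal.comp continuous_snd))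

lemma functional_repr (f : (Eucl n × ℝ) →L[ℝ] ℝ) :
    ∃ ξ : Eucl n, ∀ (q : Eucl n) (r : ℝ), f (q, r) = ⟪ξ, q⟫ + f (0, 1) * r := by
  refine ⟨(InnerProductSpace.toDual ℝ (Eucl n)).symm
    (f.comp (ContinuousLinearMap.inl ℝ (Eucl n) ℝ)), fun q r => ?_⟩
  have h1 : ⟪(InnerProductSpace.toDual ℝ (Eucl n)).symm
      (f.comp (ContinuousLinearMap.inl ℝ (Eucl n) ℝ)), q⟫ = f (q, 0) := by
    rw [InnerProductSpace.toDual_symm_apply]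
    simp
  have h2 : ((q, r) : Eucl n × ℝ) = (q, 0) + r • ((0 : Eucl n), (1 : ℝ)) := by
    simp [Prod.ext_iff]
  rw [h2, map_add, f.map_smul, h1, smul_eq_mul]
  ring

lemma separate_point_closed {C : Set (Eucl n × ℝ)} (hco : Convex ℝ C) (hcl : IsClosed C)
    {v : Eucl n} {c : ℝ} (hvc : (v, c) ∉ C) :
    ∃ (ξ : Eucl n) (s α : ℝ),
      (∀ q r, (q, r) ∈ C → ⟪ξ, q⟫ + s * r < α) ∧ α < ⟪ξ, v⟫ + s * c := by
  obtain ⟨f, α, hC, hv⟩ := geometric_hahn_banach_closed_point hco hcl hvc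
  obtain ⟨ξ, hξ⟩ := functional_repr f
  exact ⟨ξ, f (0, 1), α,
    fun q r hqr => by rw [← hξ]; exact hC _ hqr,
    by rw [← hξ]; exact hv⟩

lemma s_nonpos {s α A : ℝ} (h : ∀ t : ℝ, 0 ≤ t → A + s * t < α) : s ≤ 0 := by
  by_contra hs
  push_neg at hs
  have hA : 0 < α - A := by have := h 0 le_rfl; linarith
  have ht := h ((α - A) / s) (div_nonneg hA.le hs.le)
  rw [mul_div_cancel₀ _ (ne_of_gt hs)] at ht
  linarith

lemma div_trick {S X M A : ℝ} (hS : 0 < S) (h : X - S * M < A) : S⁻¹ * X - M ≤ A / S := by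
  rw [le_div_iff₀ hS]
  have he : (S⁻¹ * X - M) * S = X - S * M := by field_simp
  rw [he]; exact h.le

lemma div_trick_lt {S X M A : ℝ} (hS : 0 < S) (h : A < X - S * M) : A / S < S⁻¹ * X - M := by
  rw [div_lt_iff₀ hS]
  have he : (S⁻¹ * X - M) * S = X - S * M := by field_simp
  rw [he]; exact h

lemma inner_sub_le_of_conj {φ : Eucl n → EReal} {v q : Eucl n} {a R : ℝ}
    (hbot : φ q ≠ ⊥) (hup : φ q ≤ (R : EReal)) (hconj : eConj φ v ≤ (a : EReal)) :
    ⟪v, q⟫ - a ≤ R := by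
  have htop : φ q ≠ ⊤ := ne_top_of_le_ne_top (EReal.coe_ne_top R) hup
  obtain ⟨m, hm⟩ := ereal_real hbot htop
  have h1 := le_eConj φ v q
  rw [hm, ← EReal.coe_sub] at h1
  have h2 := EReal.coe_le_coe_iff.mp (h1.trans hconj)
  have h3 : m ≤ R := EReal.coe_le_coe_iff.mp (hm ▸ hup)
  linarith


lemma exists_eConj_ne_top {φ : Eucl n → EReal} (hp : EProper φ) (hc : EConvex φ)
    (hl : LowerSemicontinuous φ) : ∃ (v₀ : Eucl n) (β₀ : ℝ), eConj φ v₀ ≤ (β₀ : EReal) := by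
  obtain ⟨hb, p₀, ht⟩ := hp
  obtain ⟨m, hm⟩ := ereal_real (hb p₀) ht
  have hnot : ((p₀, m - 1) : Eucl n × ℝ) ∉ epiSet φ := by
    simp only [epiSet, mem_setOf_eq, hm, EReal.coe_le_coe_iff]
    intro h2; linarith
  obtain ⟨ξ, s, α, hC, hv⟩ := separate_point_closed (convex_epiSet hb hc)
    (closed_epiSet_of_lsc hl) hnot
  have hsle : s ≤ 0 := s_nonpos (A := ⟪ξ, p₀⟫ + s * m) (α := α) fun t ht' => by
    have h := hC p₀ (m + t)
      (by simp only [epiSet, mem_setOf_eq, hm, EReal.coe_le_coe_iff]; linarith)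
    nlinarith [h]
  have hslt : s < 0 := by
    rcases hsle.lt_or_eq with h | h
    · exact h
    · exfalso
      have h1 := hC p₀ m (by simp [epiSet, hm])
      rw [h] at h1 hv
      simp only [zero_mul, add_zero] at h1 hv
      linarith
  set S := -s with hS
  have hSpos : 0 < S := by simp only [hS]; linarith
  refine ⟨S⁻¹ • ξ, α / S, eConj_le_coe hb fun q mq hmq => ?_⟩
  have h1 := hC q mq (by simp [epiSet, hmq])
  have h1' : ⟪ξ, q⟫ - S * mq < α := by rw [hS]; ring_nf; ring_nf at h1; linarith
  have h2 := div_trick hSpos h1'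
  rw [real_inner_smul_left]; exact h2

lemma coe_le_biconj {φ : Eucl n → EReal} {p v : Eucl n} {β c : ℝ}
    (hvβ : eConj φ v ≤ (β : EReal)) (h2 : c < ⟪p, v⟫ - β) :
    ((c : ℝ) : EReal) ≤ eConj (eConj φ) p :=
  calc ((c : ℝ) : EReal) ≤ ((⟪p, v⟫ - β : ℝ) : EReal) := EReal.coe_le_coe_iff.mpr h2.le
    _ = ((⟪p, v⟫ : ℝ) : EReal) - ((β : ℝ) : EReal) := EReal.coe_sub _ _
    _ ≤ ((⟪p, v⟫ : ℝ) : EReal) - eConj φ v := EReal.sub_le_sub le_rfl hvβ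
    _ ≤ eConj (eConj φ) p := le_eConj _ p v

lemma le_biconj {φ : Eucl n → EReal} (hp : EProper φ) (hc : EConvex φ)
    (hl : LowerSemicontinuous φ) (p : Eucl n) : φ p ≤ eConj (eConj φ) p := by
  refine EReal.ge_of_forall_gt_iff_ge.1 fun c hc' => ?_
  have hb := hp.1
  have hnot : ((p, c) : Eucl n × ℝ) ∉ epiSet φ := fun hmem => absurd hc' (not_lt.mpr hmem)
  obtain ⟨ξ, s, α, hC, hv⟩ := separate_point_closed (convex_epiSet hb hc)
    (closed_epiSet_of_lsc hl) hnot
  obtain ⟨p₀, ht₀⟩ := hp.2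
  obtain ⟨m₀, hm₀⟩ := ereal_real (hb p₀) ht₀
  have hsle : s ≤ 0 := s_nonpos (A := ⟪ξ, p₀⟫ + s * m₀) (α := α) fun t ht' => by
    have h := hC p₀ (m₀ + t)
      (by simp only [epiSet, mem_setOf_eq, hm₀, EReal.coe_le_coe_iff]; linarith)
    nlinarith [h]
  rcases hsle.lt_or_eq with hslt | hs0
  · set S := -s with hS
    have hSpos : 0 < S := by simp only [hS]; linarith
    have hvβ : eConj φ (S⁻¹ • ξ) ≤ ((α / S : ℝ) : EReal) := by
      refine eConj_le_coe hb fun q mq hmq => ?_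
      have h1 := hC q mq (by simp [epiSet, hmq])
      have h1' : ⟪ξ, q⟫ - S * mq < α := by rw [hS]; ring_nf; ring_nf at h1; linarith
      have h2 := div_trick hSpos h1'
      rw [real_inner_smul_left]; exact h2
    refine coe_le_biconj hvβ ?_
    have h3 : α < ⟪ξ, p⟫ - S * c := by rw [hS]; ring_nf; ring_nf at hv; linarith
    have h4 := div_trick_lt hSpos h3
    rw [real_inner_comm (S⁻¹ • ξ) p, real_inner_smul_left]
    linarith [h4]
  · obtain ⟨v₀, β₀, hv₀⟩ := exists_eConj_ne_top ⟨hb, p₀, ht₀⟩ hc hl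
    rw [hs0] at hC hv
    simp only [zero_mul, add_zero] at hv
    have hdom : ∀ q (mq : ℝ), φ q = (mq : EReal) → ⟪ξ, q⟫ < α := fun q mq hmq => by
      have h := hC q mq (by simp [epiSet, hmq])
      simpa using h
    set t := max 0 ((c - (⟪p, v₀⟫ - β₀)) / (⟪ξ, p⟫ - α) + 1) with htdef
    have ht0 : 0 ≤ t := le_max_left _ _
    have hDpos : 0 < ⟪ξ, p⟫ - α := by linarith
    have htD : c - (⟪p, v₀⟫ - β₀) < t * (⟪ξ, p⟫ - α) := by
      have h5 : (c - (⟪p, v₀⟫ - β₀)) / (⟪ξ, p⟫ - α) + 1 ≤ t := le_max_right _ _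
      have h6 := mul_le_mul_of_nonneg_right h5 hDpos.le
      rw [add_mul, div_mul_cancel₀ _ hDpos.ne', one_mul] at h6
      linarith
    have hvβ : eConj φ (v₀ + t • ξ) ≤ ((β₀ + t * α : ℝ) : EReal) := by
      refine eConj_le_coe hb fun q mq hmq => ?_
      have ha1 : ⟪v₀, q⟫ - mq ≤ β₀ := sub_le_of_eConj_le hv₀ hmq
      have ha2 : ⟪ξ, q⟫ < α := hdom q mq hmq
      have e : ⟪v₀ + t • ξ, q⟫ = ⟪v₀, q⟫ + t * ⟪ξ, q⟫ := by
        rw [inner_add_left, real_inner_smul_left]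
      rw [e]
      nlinarith [mul_le_mul_of_nonneg_left ha2.le ht0]
    refine coe_le_biconj hvβ ?_
    have e2 : ⟪p, v₀ + t • ξ⟫ = ⟪p, v₀⟫ + t * ⟪ξ, p⟫ := by
      rw [inner_add_right, real_inner_comm (t • ξ) p, real_inner_smul_left]
    rw [e2]
    nlinarith [htD]

end FMaux

/-- Proposition 2.6 of the paper. For fixed `t, x, y` and constants
`k, w ≥ 0`, given proper convex lower semicontinuous `H(t,x,·)`, `H(t,y,·)` with conjugates
`L(t,x,·) = H*(t,x,·)`, `L(t,y,·) = H*(t,y,·)`, condition (a) is equivalent to (b). -/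
theorem hamiltonian_lipschitz_iff_lagrangian_lipschitz (n : ℕ)
    (k w : ℝ) (hk : 0 ≤ k) (hw : 0 ≤ w) (x y : Eucl n)
    (Hx Hy : Eucl n → EReal)
    (hxp : EProper Hx) (hxc : EConvex Hx) (hxl : LowerSemicontinuous Hx)
    (hyp : EProper Hy) (hyc : EConvex Hy) (hyl : LowerSemicontinuous Hy) :
    -- (a)
    ((∀ p : Eucl n, Hx p ≤ Hy p + ((k * ‖p‖ * ‖x - y‖ + w : ℝ) : EReal)) ↔
    -- (b)
      (∀ v : Eucl n, eConj Hx v ≠ ⊤ →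
        ∃ u : Eucl n, eConj Hy u ≠ ⊤ ∧ ‖u - v‖ ≤ k * ‖x - y‖ ∧
          eConj Hy u ≤ eConj Hx v + ((w : ℝ) : EReal))) := by
  constructor
  · -- (a) → (b)
    intro ha v hvtop
    have hvbot := FMaux.eConj_ne_bot hxp v
    obtain ⟨a, hva⟩ := FMaux.ereal_real hvbot hvtop
    have hκ : 0 ≤ k * ‖x - y‖ := mul_nonneg hk (norm_nonneg _)
    have hmem : ((v, a + w) : Eucl n × ℝ) ∈
        (closedBall (0 : Eucl n) (k * ‖x - y‖)) ×ˢ ({0} : Set ℝ)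
          + FMaux.epiSet (eConj Hy) := by
      by_contra hnot
      obtain ⟨ξ, s, α, hC, hv⟩ := FMaux.separate_point_closed
        (((convex_closedBall _ _).prod (convex_singleton _)).add
          (FMaux.convex_epiSet_eConj hyp.1))
        ((FMaux.closed_epiSet_eConj Hy).add_left_of_isCompact
          ((isCompact_closedBall _ _).prod isCompact_singleton))
        hnot
      have hCmem : ∀ (bb qq : Eucl n) (rr : ℝ), ‖bb‖ ≤ k * ‖x - y‖ →
          eConj Hy qq ≤ (rr : EReal) → ⟪ξ, bb⟫ + ⟪ξ, qq⟫ + s * rr < α := by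
        intro bb qq rr hbb hqq
        have hmm : ((bb, (0 : ℝ)) + (qq, rr)) ∈
            (closedBall (0 : Eucl n) (k * ‖x - y‖)) ×ˢ ({0} : Set ℝ)
              + FMaux.epiSet (eConj Hy) :=
          add_mem_add (Set.mem_prod.mpr ⟨mem_closedBall_zero_iff.mpr hbb, rfl⟩) hqq
        have heq : ((bb, (0 : ℝ)) + (qq, rr)) = ((bb + qq, rr) : Eucl n × ℝ) := by
          simp [Prod.ext_iff]
        rw [heq] at hmm
        have h := hC (bb + qq) rr hmm
        rwa [inner_add_right] at h
      obtain ⟨q₀, β₀, hq₀⟩ := FMaux.exists_eConj_ne_top hyp hyc hyl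
      have hsle : s ≤ 0 := FMaux.s_nonpos
          (A := ⟪ξ, (0 : Eucl n)⟫ + ⟪ξ, q₀⟫ + s * β₀) (α := α) fun t ht' => by
        have h := hCmem 0 q₀ (β₀ + t) (by simpa using hκ)
          (hq₀.trans (EReal.coe_le_coe_iff.mpr (by linarith)))
        nlinarith [h]
      have hbnorm : ‖((k * ‖x - y‖) / ‖ξ‖) • ξ‖ ≤ k * ‖x - y‖ := by
        rcases eq_or_ne ξ 0 with h0 | h0
        · simp [h0, hκ]
        · rw [norm_smul, Real.norm_eq_abs, abs_of_nonneg (div_nonneg hκ (norm_nonneg _)),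
            div_mul_cancel₀ _ (norm_ne_zero_iff.mpr h0)]
      have hbinner : ⟪ξ, ((k * ‖x - y‖) / ‖ξ‖) • ξ⟫ = (k * ‖x - y‖) * ‖ξ‖ := by
        rcases eq_or_ne ξ 0 with h0 | h0
        · simp [h0]
        · have hn : ‖ξ‖ ≠ 0 := norm_ne_zero_iff.mpr h0
          rw [real_inner_smul_right, real_inner_self_eq_norm_mul_norm]
          field_simp
      rcases hsle.lt_or_eq with hslt | hs0
      · set S := -s with hS
        have hSpos : 0 < S := by simp only [hS]; linarith
        have hvβ : eConj (eConj Hy) (S⁻¹ • ξ)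
            ≤ (((α - (k * ‖x - y‖) * ‖ξ‖) / S : ℝ) : EReal) := by
          refine FMaux.eConj_le_coe (FMaux.eConj_ne_bot hyp) fun q mq hmq => ?_
          have h1 := hCmem (((k * ‖x - y‖) / ‖ξ‖) • ξ) q mq hbnorm (le_of_eq hmq)
          rw [hbinner] at h1
          have h1' : ⟪ξ, q⟫ - S * mq < α - (k * ‖x - y‖) * ‖ξ‖ := by
            rw [hS]; ring_nf; ring_nf at h1; linarith
          have h2 := FMaux.div_trick hSpos h1'
          rw [real_inner_smul_left]; exact h2
        have hHy : Hy (S⁻¹ • ξ) ≤ (((α - (k * ‖x - y‖) * ‖ξ‖) / S : ℝ) : EReal) :=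
          (FMaux.le_biconj hyp hyc hyl _).trans hvβ
        have hHx : Hx (S⁻¹ • ξ) ≤ (((α - (k * ‖x - y‖) * ‖ξ‖) / S
            + (k * ‖S⁻¹ • ξ‖ * ‖x - y‖ + w) : ℝ) : EReal) := by
          refine (ha (S⁻¹ • ξ)).trans ?_
          calc Hy (S⁻¹ • ξ) + ((k * ‖S⁻¹ • ξ‖ * ‖x - y‖ + w : ℝ) : EReal)
              ≤ (((α - (k * ‖x - y‖) * ‖ξ‖) / S : ℝ) : EReal)
                + ((k * ‖S⁻¹ • ξ‖ * ‖x - y‖ + w : ℝ) : EReal) := add_le_add hHy le_rfl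
            _ = _ := by rw [← EReal.coe_add]
        have hfin : ⟪v, S⁻¹ • ξ⟫ - a
            ≤ (α - (k * ‖x - y‖) * ‖ξ‖) / S + (k * ‖S⁻¹ • ξ‖ * ‖x - y‖ + w) :=
          FMaux.inner_sub_le_of_conj (hxp.1 _) hHx (le_of_eq hva)
        have hnormζ : ‖S⁻¹ • ξ‖ = S⁻¹ * ‖ξ‖ := by
          rw [norm_smul, Real.norm_eq_abs, abs_of_pos (inv_pos.mpr hSpos)]
        have hinnerζ : ⟪v, S⁻¹ • ξ⟫ = S⁻¹ * ⟪ξ, v⟫ := by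
          rw [real_inner_smul_right, real_inner_comm ξ v]
        rw [hnormζ, hinnerζ] at hfin
        have h6 := mul_le_mul_of_nonneg_left hfin hSpos.le
        have hSne : S ≠ 0 := hSpos.ne'
        have e₁ : S * (S⁻¹ * ⟪ξ, v⟫ - a) = ⟪ξ, v⟫ - S * a := by field_simp
        have e₂ : S * ((α - (k * ‖x - y‖) * ‖ξ‖) / S + (k * (S⁻¹ * ‖ξ‖) * ‖x - y‖ + w))
            = α - (k * ‖x - y‖) * ‖ξ‖ + k * ‖ξ‖ * ‖x - y‖ + S * w := by
          field_simp
          ring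
        rw [e₁, e₂] at h6
        have hv' : α < ⟪ξ, v⟫ - S * (a + w) := by
          rw [hS]; ring_nf; ring_nf at hv; linarith
        nlinarith [h6, hv']
      · rw [hs0] at hCmem hv
        simp only [zero_mul, add_zero] at hCmem hv
        obtain ⟨p₀, hp₀t⟩ := hyp.2
        obtain ⟨m₀, hm₀⟩ := FMaux.ereal_real (hyp.1 p₀) hp₀t
        have minor : ∀ (qq : Eucl n) (mq : ℝ), eConj Hy qq = (mq : EReal) →
            ⟪qq, p₀⟫ - m₀ ≤ mq := by
          intro qq mq hmq
          have h1 := FMaux.le_eConj Hy qq p₀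
          rw [hm₀, ← EReal.coe_sub, hmq] at h1
          exact EReal.coe_le_coe_iff.mp h1
        have hdom : ∀ (qq : Eucl n) (mq : ℝ), eConj Hy qq = (mq : EReal) →
            ⟪ξ, qq⟫ + (k * ‖x - y‖) * ‖ξ‖ < α := by
          intro qq mq hmq
          have h1 := hCmem (((k * ‖x - y‖) / ‖ξ‖) • ξ) qq mq hbnorm (le_of_eq hmq)
          rw [hbinner] at h1
          linarith
        have hα : α < ⟪ξ, v⟫ := hv
        have hDpos : 0 < ⟪ξ, v⟫ - α := by linarith
        set M := m₀ + k * ‖p₀‖ * ‖x - y‖ + w + a - ⟪v, p₀⟫ with hM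
        set t := max 0 (M / (⟪ξ, v⟫ - α) + 1) with htdef
        have ht0 : 0 ≤ t := le_max_left _ _
        have htM : M < t * (⟪ξ, v⟫ - α) := by
          have h5 : M / (⟪ξ, v⟫ - α) + 1 ≤ t := le_max_right _ _
          have h6 := mul_le_mul_of_nonneg_right h5 hDpos.le
          rw [add_mul, div_mul_cancel₀ _ hDpos.ne', one_mul] at h6
          linarith
        have hvβ : eConj (eConj Hy) (p₀ + t • ξ) ≤
            ((m₀ + t * (α - (k * ‖x - y‖) * ‖ξ‖) : ℝ) : EReal) := by
          refine FMaux.eConj_le_coe (FMaux.eConj_ne_bot hyp) fun qq mq hmq => ?_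
          have ha1 := minor qq mq hmq
          have ha2 := hdom qq mq hmq
          have e : ⟪p₀ + t • ξ, qq⟫ = ⟪p₀, qq⟫ + t * ⟪ξ, qq⟫ := by
            rw [inner_add_left, real_inner_smul_left]
          rw [e]
          have hcomm : ⟪p₀, qq⟫ = ⟪qq, p₀⟫ := real_inner_comm qq p₀
          nlinarith [mul_le_mul_of_nonneg_left ha2.le ht0, hcomm]
        have hHy2 := (FMaux.le_biconj hyp hyc hyl (p₀ + t • ξ)).trans hvβ
        have hHx2 : Hx (p₀ + t • ξ) ≤ ((m₀ + t * (α - (k * ‖x - y‖) * ‖ξ‖)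
            + (k * ‖p₀ + t • ξ‖ * ‖x - y‖ + w) : ℝ) : EReal) := by
          refine (ha (p₀ + t • ξ)).trans ?_
          calc Hy (p₀ + t • ξ) + ((k * ‖p₀ + t • ξ‖ * ‖x - y‖ + w : ℝ) : EReal)
              ≤ ((m₀ + t * (α - (k * ‖x - y‖) * ‖ξ‖) : ℝ) : EReal)
                + ((k * ‖p₀ + t • ξ‖ * ‖x - y‖ + w : ℝ) : EReal) := add_le_add hHy2 le_rfl
            _ = _ := by rw [← EReal.coe_add]
        have hfin := FMaux.inner_sub_le_of_conj (hxp.1 _) hHx2 (le_of_eq hva)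
        have e3 : ⟪v, p₀ + t • ξ⟫ = ⟪v, p₀⟫ + t * ⟪ξ, v⟫ := by
          rw [inner_add_right, real_inner_smul_right, real_inner_comm ξ v]
        have e4 : ‖p₀ + t • ξ‖ ≤ ‖p₀‖ + t * ‖ξ‖ := by
          calc ‖p₀ + t • ξ‖ ≤ ‖p₀‖ + ‖t • ξ‖ := norm_add_le _ _
            _ = ‖p₀‖ + t * ‖ξ‖ := by rw [norm_smul, Real.norm_eq_abs, abs_of_nonneg ht0]
        rw [e3] at hfin
        have e5 : k * ‖p₀ + t • ξ‖ * ‖x - y‖ ≤ k * (‖p₀‖ + t * ‖ξ‖) * ‖x - y‖ :=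
          mul_le_mul_of_nonneg_right (mul_le_mul_of_nonneg_left e4 hk) (norm_nonneg _)
        nlinarith [hfin, e5, htM]
    rw [Set.mem_add] at hmem
    obtain ⟨b0, hb0, qr, hqr, hsum⟩ := hmem
    obtain ⟨b0v, b0r⟩ := b0
    obtain ⟨q, r⟩ := qr
    obtain ⟨hb0ball, hb0r⟩ := Set.mem_prod.mp hb0
    have hb0r' : b0r = 0 := hb0r
    have h1 : b0v + q = v := congrArg Prod.fst hsum
    have h2 : b0r + r = a + w := congrArg Prod.snd hsum
    refine ⟨q, ne_top_of_le_ne_top (EReal.coe_ne_top r) hqr, ?_, ?_⟩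
    · have hqv : q - v = -b0v := by rw [← h1]; abel
      rw [hqv, norm_neg]
      exact mem_closedBall_zero_iff.mp hb0ball
    · have hr : r = a + w := by rw [hb0r'] at h2; linarith
      rw [hva, ← EReal.coe_add]
      exact hr ▸ hqr
  · -- (b) → (a)
    intro hb p
    refine EReal.ge_of_forall_gt_iff_ge.1 fun c hcp => ?_
    have hlt : (c : EReal) < eConj (eConj Hx) p :=
      lt_of_lt_of_le hcp (FMaux.le_biconj hxp hxc hxl p)
    rw [eConj, lt_iSup_iff] at hlt
    obtain ⟨v, hvlt⟩ := hlt
    have hvtop : eConj Hx v ≠ ⊤ := by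
      intro h
      rw [h, EReal.sub_top] at hvlt
      simp at hvlt
    obtain ⟨a, hva⟩ := FMaux.ereal_real (FMaux.eConj_ne_bot hxp v) hvtop
    rw [hva, ← EReal.coe_sub, EReal.coe_lt_coe_iff] at hvlt
    obtain ⟨u, hutop, hunear, hule⟩ := hb v hvtop
    obtain ⟨bu, hbu⟩ := FMaux.ereal_real (FMaux.eConj_ne_bot hyp u) hutop
    have hba : bu ≤ a + w := by
      rw [hbu, hva, ← EReal.coe_add] at hule
      exact EReal.coe_le_coe_iff.mp hule
    rcases eq_or_ne (Hy p) ⊤ with hyt | hyt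
    · rw [hyt, EReal.top_add_coe]
      exact le_top
    obtain ⟨hm, hhm⟩ := FMaux.ereal_real (hyp.1 p) hyt
    have h4 : ⟪u, p⟫ - hm ≤ bu := by
      have h := FMaux.le_eConj Hy u p
      rw [hhm, ← EReal.coe_sub, hbu] at h
      exact EReal.coe_le_coe_iff.mp h
    rw [hhm, ← EReal.coe_add, EReal.coe_le_coe_iff]
    have h5 : |⟪u - v, p⟫| ≤ ‖u - v‖ * ‖p‖ := abs_real_inner_le_norm _ _
    have h6 : ‖u - v‖ * ‖p‖ ≤ k * ‖x - y‖ * ‖p‖ :=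
      mul_le_mul_of_nonneg_right hunear (norm_nonneg _)
    have h7 : ⟪u - v, p⟫ = ⟪u, p⟫ - ⟪v, p⟫ := inner_sub_left _ _ _
    have h8 := abs_le.mp h5
    have h9 : ⟪p, v⟫ = ⟪v, p⟫ := real_inner_comm _ _
    have hmul : k * ‖x - y‖ * ‖p‖ = k * ‖p‖ * ‖x - y‖ := by ring
    linarith [h8.1, h4, hba, hvlt, h6, h7, h9, hmul]
end
end

section
/- Suppose H : [0,T]×ℝⁿ×ℝⁿ → ℝ satisfies (H1) t-measurability, (H2) continuity in (x,p), (H3) convexity in p, and (HLC): for every R > 0 there exist a measurable k_R : [0,T] → [0,∞), a modulus w_R, and a null set N_R such that |H(t,x,p) − H(t,y,p)| ≤ k_R(t)|p||x−y| + w_R(t,|x−y|) for all t ∈ [0,T]\N_R, x,y ∈ B_R, p ∈ ℝⁿ. Let L(t,x,v) := sup_{p∈ℝⁿ}(⟨v,p⟩ − H(t,x,p)) and E_L(t,x) be its epigraph in v. Then for every R > 0, all t ∈ [0,T]\N_R, and all x,y ∈ B_R, the (extended) Hausdorff distance satisfies ℋ(E_L(t,x), E_L(t,y)) ≤ 2k_R(t)|x−y|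 + 2w_R(t,|x−y|). -/
open Filter Topology MeasureTheory Set Metric
open scoped RealInnerProductSpace Pointwise

noncomputable section

set_option maxHeartbeats 1000000 in
/-- Sandwich lemma: a convex function dominating `-K‖·‖` admits a linear minorant
with slope of norm at most `K`. -/
lemma sandwich_lemma {n : ℕ} (F : Eucl n → ℝ) (hF : ConvexOn ℝ univ F) (hFc : Continuous F)
    (K : ℝ) (hK : 0 ≤ K) (hlb : ∀ p, -(K * ‖p‖) ≤ F p) :
    ∃ a : Eucl n, ‖a‖ ≤ K ∧ ∀ p, ⟪a, p⟫ ≤ F p := by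
  set S : Set (Eucl n × ℝ) := {q | F q.1 < q.2} with hS
  set T : Set (Eucl n × ℝ) := {q | q.2 ≤ -(K * ‖q.1‖)} with hT
  have hSopen : IsOpen S := isOpen_lt (hFc.comp continuous_fst) continuous_snd
  have hSconv : Convex ℝ S := by
    intro q hq r hr a b ha hb hab
    simp only [hS, mem_setOf_eq] at hq hr ⊢
    have h1 := hF.2 (mem_univ q.1) (mem_univ r.1) ha hb hab
    have h2 : a * F q.1 + b * F r.1 < a * q.2 + b * r.2 := by
      rcases lt_or_ge 0 a with ha' | ha'
      · have := mul_le_mul_of_nonneg_left hr.le hb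
        nlinarith [mul_lt_mul_of_pos_left hq ha']
      · have ha0 : a = 0 := le_antisymm ha' ha
        have hb1 : b = 1 := by linarith
        simp [ha0, hb1, hr]
    calc F (a • q.1 + b • r.1) ≤ a * F q.1 + b * F r.1 := by simpa using h1
    _ < a * q.2 + b * r.2 := h2
  have hTconv : Convex ℝ T := by
    intro q hq r hr a b ha hb hab
    simp only [hT, mem_setOf_eq] at hq hr
    have hn : ‖a • q.1 + b • r.1‖ ≤ a * ‖q.1‖ + b * ‖r.1‖ := by
      calc ‖a • q.1 + b • r.1‖ ≤ ‖a • q.1‖ + ‖b • r.1‖ := norm_add_le _ _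
      _ = a * ‖q.1‖ + b * ‖r.1‖ := by
          rw [norm_smul, norm_smul, Real.norm_eq_abs, Real.norm_eq_abs,
            abs_of_nonneg ha, abs_of_nonneg hb]
    have hgoal : a * q.2 + b * r.2 ≤ -(K * ‖a • q.1 + b • r.1‖) := by
      nlinarith [mul_le_mul_of_nonneg_left hq ha, mul_le_mul_of_nonneg_left hr hb,
        mul_le_mul_of_nonneg_left hn hK]
    show (a • q + b • r).2 ≤ -(K * ‖(a • q + b • r).1‖)
    simpa [Prod.fst_add, Prod.snd_add, Prod.smul_fst, Prod.smul_snd, smul_eq_mul] using hgoal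
  have hdisj : Disjoint S T := by
    rw [Set.disjoint_left]
    intro q hqS hqT
    exact absurd (lt_of_lt_of_le hqS hqT) (not_lt.2 (hlb q.1))
  obtain ⟨f, u, hfS, hfT⟩ := geometric_hahn_banach_open hSconv hSopen hTconv hdisj
  set β : ℝ := f ((0 : Eucl n), (1 : ℝ)) with hβ
  have hsplit : ∀ (p : Eucl n) (t : ℝ), f (p, t) = f (p, 0) + t * β := by
    intro p t
    have hpt : ((p, t) : Eucl n × ℝ) = (p, (0:ℝ)) + t • ((0 : Eucl n), (1 : ℝ)) := by
      simp [Prod.ext_iff]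
    rw [hpt, map_add, f.map_smul, smul_eq_mul]
  have hfS' : ∀ (p : Eucl n) (t : ℝ), F p < t → f (p, 0) + t * β < u := by
    intro p t h
    have := hfS (p, t) h
    rwa [hsplit] at this
  have hfT' : ∀ p : Eucl n, u ≤ f (p, 0) + (-(K * ‖p‖)) * β := by
    intro p
    have hmemT : ((p, -(K * ‖p‖)) : Eucl n × ℝ) ∈ T := by simp [hT]
    have := hfT (p, -(K * ‖p‖)) hmemT
    rwa [hsplit] at this
  have hu : u ≤ 0 := by
    have := hfT' 0
    have h0 : f ((0 : Eucl n), (0:ℝ)) = 0 := by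
      rw [show ((0 : Eucl n), (0:ℝ)) = (0 : Eucl n × ℝ) from rfl, map_zero]
    simpa [h0] using this
  have hβneg : β < 0 := by
    rcases lt_trichotomy β 0 with h | h | h
    · exact h
    · exfalso
      have h1 := hfS' 0 (F 0 + 1) (by linarith)
      have h2 := hfT' 0
      simp [h] at h1 h2
      linarith
    · exfalso
      -- take t large in S at p = 0
      have hf00 : f ((0 : Eucl n), (0:ℝ)) = 0 := by
        have : ((0 : Eucl n), (0:ℝ)) = (0 : Eucl n × ℝ) := rfl
        rw [this, map_zero]
      set t := max (F 0 + 1) ((u + 1) / β) with ht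
      have h1 : F 0 < t := lt_of_lt_of_le (by linarith) (le_max_left _ _)
      have h2 := hfS' 0 t h1
      rw [hf00] at h2
      have h3 : (u + 1) / β ≤ t := le_max_right _ _
      have h4 : u + 1 ≤ t * β := by
        rw [div_le_iff₀ h] at h3
        linarith
      linarith
  -- key inequality (i)
  have keyi : ∀ p : Eucl n, f (p, 0) + F p * β ≤ u := by
    intro p
    by_contra hcon
    push_neg at hcon
    set d := f (p, 0) + F p * β - u with hd
    have hd0 : 0 < d := by simp only [hd]; linarith
    set ε := d / (2 * (-β)) with hε
    have hε0 : 0 < ε := div_pos hd0 (by linarith)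
    have hmem := hfS' p (F p + ε) (by linarith)
    have hεβ : ε * β = -(d / 2) := by
      have h2ne : (2 : ℝ) * (-β) ≠ 0 := ne_of_gt (by linarith)
      rw [hε, div_mul_eq_mul_div, div_eq_iff h2ne]
      ring
    nlinarith [hmem, hεβ, hd0]
  -- the slope
  set G : Eucl n →L[ℝ] ℝ := f.comp (ContinuousLinearMap.inl ℝ (Eucl n) ℝ) with hG
  set a : Eucl n := (-β)⁻¹ • (InnerProductSpace.toDual ℝ (Eucl n)).symm G with ha
  have hainner : ∀ p : Eucl n, ⟪a, p⟫ = (-β)⁻¹ * f (p, 0) := by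
    intro p
    rw [ha, real_inner_smul_left, InnerProductSpace.toDual_symm_apply]
    simp [hG]
  have hinv : 0 < (-β)⁻¹ := inv_pos.2 (by linarith)
  have hbinv : (-β)⁻¹ * β = -1 := by
    rw [inv_neg, neg_mul, inv_mul_cancel₀ (ne_of_lt hβneg)]
  have hclaim1 : ∀ p, ⟪a, p⟫ ≤ F p := by
    intro p
    have h1 := mul_le_mul_of_nonneg_left (keyi p) hinv.le
    have e1 : (-β)⁻¹ * (f (p, 0) + F p * β) = ⟪a, p⟫ - F p := by
      rw [hainner p]
      linear_combination F p * hbinv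
    have e2 : (-β)⁻¹ * u ≤ 0 := mul_nonpos_of_nonneg_of_nonpos hinv.le hu
    linarith
  have key2 : ∀ p : Eucl n, (-β)⁻¹ * u ≤ ⟪a, p⟫ + K * ‖p‖ := by
    intro p
    have h1 := mul_le_mul_of_nonneg_left (hfT' p) hinv.le
    have e1 : (-β)⁻¹ * (f (p, 0) + (-(K * ‖p‖)) * β) = ⟪a, p⟫ + K * ‖p‖ := by
      rw [hainner p]
      linear_combination (-(K * ‖p‖)) * hbinv
    linarith
  have hu' : (-β)⁻¹ * u ≤ 0 := mul_nonpos_of_nonneg_of_nonpos hinv.le hu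
  have h2 : ∀ p : Eucl n, 0 ≤ ⟪a, p⟫ + K * ‖p‖ := by
    intro p
    by_contra hcon
    push_neg at hcon
    set c := ⟪a, p⟫ + K * ‖p‖ with hc
    set s := ((-β)⁻¹ * u - 1) / c with hs
    have hs0 : 0 < s := div_pos_of_neg_of_neg (by linarith) hcon
    have := key2 (s • p)
    rw [real_inner_smul_right, norm_smul, Real.norm_eq_abs, abs_of_pos hs0] at this
    have hsc : s * c = (-β)⁻¹ * u - 1 := div_mul_cancel₀ _ (ne_of_lt hcon)
    nlinarith
  have hna : ‖a‖ ≤ K := by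
    have := h2 (-a)
    rw [inner_neg_right, norm_neg, real_inner_self_eq_norm_sq] at this
    nlinarith [norm_nonneg a]
  exact ⟨a, hna, hclaim1⟩

lemma oneSided {n : ℕ} (Hx Hy : Eucl n → ℝ)
    (hconv : ConvexOn ℝ univ Hy) (hcont : Continuous Hy)
    (K c : ℝ) (hK : 0 ≤ K) (hc : 0 ≤ c)
    (hle : ∀ p : Eucl n, Hx p - (K * ‖p‖ + c) ≤ Hy p) :
    ∀ q ∈ {q : Eucl n × ℝ | (⨆ p : Eucl n, ((⟪q.1, p⟫ - Hx p : ℝ) : EReal)) ≤ (q.2 : EReal)},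
      EMetric.infEdist q
        {q : Eucl n × ℝ | (⨆ p : Eucl n, ((⟪q.1, p⟫ - Hy p : ℝ) : EReal)) ≤ (q.2 : EReal)} ≤
      ENNReal.ofReal (2 * K + 2 * c) := by
  rintro ⟨v, η⟩ hq
  simp only [mem_setOf_eq] at hq
  have hvp : ∀ p : Eucl n, ⟪v, p⟫ - Hx p ≤ η := by
    intro p
    have h := le_trans (le_iSup (fun p : Eucl n => ((⟪v, p⟫ - Hx p : ℝ) : EReal)) p) hq
    exact_mod_cast h
  set F : Eucl n → ℝ := fun p => Hy p + (-⟪v, p⟫ + (η + c)) with hF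
  have haff : ConvexOn ℝ univ (fun p : Eucl n => -⟪v, p⟫ + (η + c)) := by
    refine ⟨convex_univ, ?_⟩
    intro x _ y _ a b ha hb hab
    have heq : -⟪v, a • x + b • y⟫ + (η + c)
        = a • (-⟪v, x⟫ + (η + c)) + b • (-⟪v, y⟫ + (η + c)) := by
      simp only [smul_eq_mul, inner_add_right, real_inner_smul_right]
      linear_combination (-(η + c)) * hab
    exact le_of_eq heq
  have hFconv : ConvexOn ℝ univ F := hconv.add haff
  have hFcont : Continuous F :=
    hcont.add (((continuous_const.inner continuous_id).neg).add continuous_const)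
  have hlbF : ∀ p : Eucl n, -(K * ‖p‖) ≤ F p := by
    intro p
    have h1 := hle p
    have h2 := hvp p
    simp only [hF]
    linarith
  obtain ⟨a, haK, haF⟩ := sandwich_lemma F hFconv hFcont K hK hlbF
  have hmem : ((v + a, η + c) : Eucl n × ℝ) ∈
      {q : Eucl n × ℝ | (⨆ p : Eucl n, ((⟪q.1, p⟫ - Hy p : ℝ) : EReal)) ≤ (q.2 : EReal)} := by
    simp only [mem_setOf_eq]
    refine iSup_le fun p => ?_
    have h1 := haF p
    simp only [hF] at h1
    have : ⟪v + a, p⟫ - Hy p ≤ η + c := by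
      rw [inner_add_left]
      linarith
    exact_mod_cast this
  refine le_trans (EMetric.infEdist_le_edist_of_mem hmem) ?_
  rw [Prod.edist_eq]
  have hd1 : edist v (v + a) = ENNReal.ofReal ‖a‖ := by
    rw [edist_dist, dist_eq_norm]
    simp
  have hd2 : edist η (η + c) = ENNReal.ofReal c := by
    rw [edist_dist, Real.dist_eq, abs_sub_comm, add_sub_cancel_left, abs_of_nonneg hc]
  rw [hd1, hd2]
  refine max_le (ENNReal.ofReal_le_ofReal (by linarith)) (ENNReal.ofReal_le_ofReal (by linarith))

/-- Corollary 2.5 of the paper. Under (H1)–(H3) and (HLC) (with data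
`k`, `w`, `N` for a radius `R`), the epigraph map satisfies the Hausdorff-distance estimate
`ℋ(E_L(t,x), E_L(t,y)) ≤ 2 k(t)|x−y| + 2 w(t,|x−y|)` for `t ∈ [0,T]\N` and `x, y ∈ B_R`. -/
theorem epigraph_hausdorff_estimate (n : ℕ) (T : ℝ) (hT : 0 ≤ T)
    (H : ℝ → Eucl n → Eucl n → ℝ)
    (h1 : ∀ (x p : Eucl n), Measurable fun t => H t x p)
    (h2 : ∀ t ∈ Icc (0 : ℝ) T, Continuous fun q : Eucl n × Eucl n => H t q.1 q.2)
    (h3 : ∀ t ∈ Icc (0 : ℝ) T, ∀ x : Eucl n, ConvexOn ℝ univ (H t x))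
    (R : ℝ) (hR : 0 < R)
    (k : ℝ → ℝ) (hkm : Measurable k) (hk0 : ∀ t, 0 ≤ k t)
    (w : ℝ → ℝ → ℝ) (hw : IsModulus w)
    (N : Set ℝ) (hN : volume N = 0)
    (hHLC : ∀ t ∈ Icc (0 : ℝ) T \ N, ∀ x ∈ closedBall (0 : Eucl n) R,
      ∀ y ∈ closedBall (0 : Eucl n) R, ∀ p : Eucl n,
      |H t x p - H t y p| ≤ k t * ‖p‖ * ‖x - y‖ + w t ‖x - y‖) :
    ∀ t ∈ Icc (0 : ℝ) T \ N, ∀ x ∈ closedBall (0 : Eucl n) R,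
      ∀ y ∈ closedBall (0 : Eucl n) R,
      EMetric.hausdorffEdist (epiL H t x) (epiL H t y) ≤
        ENNReal.ofReal (2 * k t * ‖x - y‖ + 2 * w t ‖x - y‖) := by
  intro t ht x hx y hy
  set K := k t * ‖x - y‖ with hKdef
  set c := w t ‖x - y‖ with hcdef
  have hK : 0 ≤ K := mul_nonneg (hk0 t) (norm_nonneg _)
  have hc : 0 ≤ c := (hw.2 t).1 _
  have hcontx : Continuous (H t x) := (h2 t ht.1).comp (Continuous.prodMk_right x)
  have hconty : Continuous (H t y) := (h2 t ht.1).comp (Continuous.prodMk_right y)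
  have hconvx : ConvexOn ℝ univ (H t x) := h3 t ht.1 x
  have hconvy : ConvexOn ℝ univ (H t y) := h3 t ht.1 y
  have habs := hHLC t ht x hx y hy
  have hle1 : ∀ p : Eucl n, H t x p - (K * ‖p‖ + c) ≤ H t y p := by
    intro p
    have := (abs_le.1 (habs p)).2
    simp only [hKdef, hcdef]
    nlinarith [this]
  have hle2 : ∀ p : Eucl n, H t y p - (K * ‖p‖ + c) ≤ H t x p := by
    intro p
    have := (abs_le.1 (habs p)).1
    simp only [hKdef, hcdef]
    nlinarith [this]
  have hgoal : EMetric.hausdorffEdist (epiL H t x) (epiL H t y) ≤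
      ENNReal.ofReal (2 * K + 2 * c) := by
    apply EMetric.hausdorffEdist_le_of_infEdist
    · intro q hq
      exact oneSided (H t x) (H t y) hconvy hconty K c hK hc hle1 q hq
    · intro q hq
      have hsym : EMetric.infEdist q
          {q : Eucl n × ℝ | (⨆ p : Eucl n, ((⟪q.1, p⟫ - H t x p : ℝ) : EReal)) ≤ (q.2 : EReal)} ≤
          ENNReal.ofReal (2 * K + 2 * c) :=
        oneSided (H t y) (H t x) hconvx hcontx K c hK hc hle2 q hq
      exact hsym
  have : 2 * K + 2 * c = 2 * k t * ‖x - y‖ + 2 * w t ‖x - y‖ := by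
    simp only [hKdef, hcdef]; ring
  rwa [this] at hgoal
end
end

section
/- Let A ⊂ ℝ^m be a nonempty compact set. Suppose f : [0,T]×ℝⁿ×A → ℝⁿ and l : [0,T]×ℝⁿ×A → ℝ are measurable in t for all (x,a) and continuous in (x,a) for all t, and for every R > 0 there exist a modulus w_R and a null set N_R such that |l(t,x,a) − l(t,y,a)| ≤ w_R(t,|x−y|) for all t ∈ [0,T]\N_R, x,y ∈ B_R, a ∈ A. If H(t,x,p) := sup_{a∈A}(⟨p, f(t,x,a)⟩ − l(t,x,a)) and L(t,x,v) := sup_{p∈ℝⁿ}(⟨v,p⟩ − H(t,x,p)), then there exists λ : [0,T]×ℝⁿ → ℝ, measurable in t for all x and continuous in x for all t, such that L(t,x,v) ≤ λ(t,x) for every t ∈ [0,T], x ∈ ℝⁿ, v ∈ dom L(t,x,·), and |λ(t,x) − λ(t,y)| ≤ w_R(t,|x−y|) for every t ∈ [0,T]\N_R, x,y ∈ B_R, R > 0 (with the same moduli w_R). Moreover, if f and l are continuous, then λ is continuous. -/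
open Filter Topology MeasureTheory Set Metric
open scoped RealInnerProductSpace Pointwise

noncomputable section

lemma csSup_image_le_add {α : Type*} {A : Set α} (hA : A.Nonempty) {u v : α → ℝ}
    (hv : BddAbove (v '' A)) {ε : ℝ} (h : ∀ a ∈ A, u a ≤ v a + ε) :
    sSup (u '' A) ≤ sSup (v '' A) + ε := by
  refine csSup_le (hA.image u) ?_
  rintro y ⟨a, ha, rfl⟩
  exact (h a ha).trans (add_le_add_left (le_csSup hv ⟨a, ha, rfl⟩) ε)

lemma abs_csSup_image_sub {α : Type*} {A : Set α} (hA : A.Nonempty) {u v : α → ℝ}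
    (hu : BddAbove (u '' A)) (hv : BddAbove (v '' A)) {ε : ℝ}
    (h : ∀ a ∈ A, |u a - v a| ≤ ε) :
    |sSup (u '' A) - sSup (v '' A)| ≤ ε := by
  rw [abs_sub_le_iff]
  constructor
  · have := csSup_image_le_add hA hv (u := u) (ε := ε) fun a ha => by
      have := (abs_sub_le_iff.1 (h a ha)).1; linarith
    linarith
  · have := csSup_image_le_add hA hu (u := v) (ε := ε) fun a ha => by
      have := (abs_sub_le_iff.1 (h a ha)).2; linarith
    linarith

lemma continuousOn_sSup_image {X Y : Type*} [MetricSpace X] [ProperSpace X] [MetricSpace Y]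
    {S : Set X} (hS : IsClosed S) {K : Set Y} (hK : IsCompact K) (hKne : K.Nonempty)
    {F : X → Y → ℝ} (hF : ContinuousOn (fun q : X × Y => F q.1 q.2) (S ×ˢ K)) :
    ContinuousOn (fun x => sSup (F x '' K)) S := by
  intro x0 hx0
  rw [Metric.continuousWithinAt_iff]
  intro ε hε
  set D : Set X := S ∩ closedBall x0 1 with hD
  have hDc : IsCompact D :=
    (isCompact_closedBall x0 1).of_isClosed_subset (hS.inter isClosed_closedBall)
      inter_subset_right
  have hFP : ContinuousOn (fun q : X × Y => F q.1 q.2) (D ×ˢ K) :=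
    hF.mono (prod_mono inter_subset_left (subset_refl _))
  have hu := (hDc.prod hK).uniformContinuousOn_of_continuous hFP
  rw [Metric.uniformContinuousOn_iff] at hu
  obtain ⟨δ, hδ, hδ'⟩ := hu (ε / 2) (by linarith)
  refine ⟨min δ 1, by positivity, fun x hx hxd => ?_⟩
  have hxD : x ∈ D := ⟨hx, mem_closedBall.2 (le_of_lt (lt_of_lt_of_le hxd (min_le_right _ _)))⟩
  have hx0D : x0 ∈ D := ⟨hx0, mem_closedBall_self (by norm_num)⟩
  have hb : ∀ z ∈ D, BddAbove (F z '' K) := by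
    intro z hz
    have hco : ContinuousOn (fun a => F z a) K := by
      have : ContinuousOn ((fun q : X × Y => F q.1 q.2) ∘ fun a => (z, a)) K :=
        hFP.comp ((continuous_const.prodMk continuous_id).continuousOn)
          (fun a ha => ⟨hz, ha⟩)
      exact this
    exact (hK.image_of_continuousOn hco).bddAbove
  have key : ∀ a ∈ K, |F x a - F x0 a| ≤ ε / 2 := by
    intro a ha
    have := hδ' (x, a) (mk_mem_prod hxD ha) (x0, a) (mk_mem_prod hx0D ha)
      (by
        rw [Prod.dist_eq]
        simp only [dist_self]
        exact lt_of_le_of_lt (max_le le_rfl (by positivity)) (lt_of_lt_of_le hxd (min_le_left _ _)))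
    rw [Real.dist_eq] at this
    exact this.le
  have := abs_csSup_image_sub hKne (hb x hxD) (hb x0 hx0D) key
  rw [Real.dist_eq]
  linarith

/-- Theorem 3.2 of the paper: necessary condition for compact control
sets. If `(A, f, l)` is a regular representation with nonempty compact control set `A`
whose Lagrangian cost `l` is `w_R`-continuous in `x`, then the Lagrangian
`L = H*` of `H(t,x,p) = sup_{a∈A}(⟨p,f(t,x,a)⟩ − l(t,x,a))` is bounded on its effective
domain by a function `λ(t,x)`, `t`-measurable, `x`-continuous, with the same moduli `w_R`;
moreover `λ` is continuous when `f, l` are. -/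
theorem compact_representation_necessary (n m : ℕ) (T : ℝ) (hT : 0 ≤ T)
    (A : Set (Eucl m)) (hA : A.Nonempty) (hAc : IsCompact A)
    (f : ℝ → Eucl n → Eucl m → Eucl n) (l : ℝ → Eucl n → Eucl m → ℝ)
    (hfm : ∀ (x : Eucl n) (a : Eucl m), Measurable fun t => f t x a)
    (hlm : ∀ (x : Eucl n) (a : Eucl m), Measurable fun t => l t x a)
    (hfc : ∀ t ∈ Icc (0 : ℝ) T,
      ContinuousOn (fun q : Eucl n × Eucl m => f t q.1 q.2)
        ((univ : Set (Eucl n)) ×ˢ A))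
    (hlc : ∀ t ∈ Icc (0 : ℝ) T,
      ContinuousOn (fun q : Eucl n × Eucl m => l t q.1 q.2)
        ((univ : Set (Eucl n)) ×ˢ A))
    (w : ℝ → ℝ → ℝ → ℝ) (N : ℝ → Set ℝ)
    (hw : ∀ R > (0 : ℝ), IsModulus (w R))
    (hN : ∀ R > (0 : ℝ), volume (N R) = 0)
    (hlw : ∀ R > (0 : ℝ), ∀ t ∈ Icc (0 : ℝ) T \ N R, ∀ x ∈ closedBall (0 : Eucl n) R,
      ∀ y ∈ closedBall (0 : Eucl n) R, ∀ a ∈ A,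
      |l t x a - l t y a| ≤ w R t ‖x - y‖)
    (H : ℝ → Eucl n → Eucl n → ℝ)
    (hH : ∀ (t : ℝ) (x p : Eucl n),
      H t x p = sSup ((fun a => ⟪p, f t x a⟫ - l t x a) '' A)) :
    ∃ lam : ℝ → Eucl n → ℝ,
      (∀ x : Eucl n, Measurable fun t => lam t x) ∧
      (∀ t ∈ Icc (0 : ℝ) T, Continuous fun x => lam t x) ∧
      -- L is bounded by λ on its effective domain
      (∀ t ∈ Icc (0 : ℝ) T, ∀ (x v : Eucl n),
        LFT H t x v ≠ ⊤ → LFT H t x v ≤ ((lam t x : ℝ) : EReal)) ∧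
      -- λ has the same moduli of continuity as l
      (∀ R > (0 : ℝ), ∀ t ∈ Icc (0 : ℝ) T \ N R, ∀ x ∈ closedBall (0 : Eucl n) R,
        ∀ y ∈ closedBall (0 : Eucl n) R, |lam t x - lam t y| ≤ w R t ‖x - y‖) ∧
      -- continuity of λ when f and l are continuous
      ((ContinuousOn (fun q : ℝ × Eucl n × Eucl m => f q.1 q.2.1 q.2.2)
          (Icc (0 : ℝ) T ×ˢ (univ : Set (Eucl n)) ×ˢ A) ∧
        ContinuousOn (fun q : ℝ × Eucl n × Eucl m => l q.1 q.2.1 q.2.2)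
          (Icc (0 : ℝ) T ×ˢ (univ : Set (Eucl n)) ×ˢ A)) →
        ContinuousOn (fun q : ℝ × Eucl n => lam q.1 q.2)
          (Icc (0 : ℝ) T ×ˢ (univ : Set (Eucl n)))) := by
  -- continuity of slices
  have hlcA : ∀ t ∈ Icc (0:ℝ) T, ∀ x : Eucl n, ContinuousOn (fun a => l t x a) A := by
    intro t ht x
    exact (hlc t ht).comp ((continuous_const.prodMk continuous_id).continuousOn)
      (fun a ha => ⟨mem_univ _, ha⟩)
  have hfcA : ∀ t ∈ Icc (0:ℝ) T, ∀ x : Eucl n, ContinuousOn (fun a => f t x a) A := by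
    intro t ht x
    exact (hfc t ht).comp ((continuous_const.prodMk continuous_id).continuousOn)
      (fun a ha => ⟨mem_univ _, ha⟩)
  have hbdd : ∀ t ∈ Icc (0:ℝ) T, ∀ x : Eucl n, BddAbove (l t x '' A) :=
    fun t ht x => ((hAc.image_of_continuousOn (hlcA t ht x)).bddAbove)
  -- dense sequence in A
  haveI : Nonempty A := hA.to_subtype
  obtain ⟨u, hu⟩ := TopologicalSpace.exists_dense_seq A
  set d : ℕ → Eucl m := fun i => (u i : Eucl m) with hdd
  have hd : ∀ i, d i ∈ A := fun i => (u i).2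
  have hdcl : ∀ a ∈ A, a ∈ closure (range d) := by
    intro a ha
    have h1 : (⟨a, ha⟩ : A) ∈ closure (range u) := hu.closure_range ▸ mem_univ _
    have h2 : a ∈ Subtype.val '' closure (range u) := ⟨⟨a, ha⟩, h1, rfl⟩
    have h3 := image_closure_subset_closure_image
      (continuous_subtype_val : Continuous ((↑) : A → Eucl m)) (s := range u)
    have h4 : Subtype.val '' range u = range d := by
      rw [← Set.range_comp]; rfl
    rw [h4] at h3
    exact h3 h2
  -- the candidate function
  set G : ℝ → Eucl n → EReal := fun t x => ⨆ i, ((l t x (d i) : ℝ) : EReal) with hG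
  have hGeq : ∀ t ∈ Icc (0:ℝ) T, ∀ x : Eucl n,
      G t x = ((sSup (l t x '' A) : ℝ) : EReal) := by
    intro t ht x
    have hb := hbdd t ht x
    refine le_antisymm (iSup_le fun i => EReal.coe_le_coe_iff.2
      (le_csSup hb ⟨d i, hd i, rfl⟩)) ?_
    have hbd : BddAbove (l t x '' range d) :=
      hb.mono (image_mono (range_subset_iff.2 hd))
    have hrange : l t x '' range d = range fun i => l t x (d i) := by
      rw [← Set.range_comp]; rfl
    have hled : sSup (l t x '' A) ≤ ⨆ i, l t x (d i) := by
      refine csSup_le (hA.image _) ?_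
      rintro y ⟨a, ha, rfl⟩
      have hcl : IsClosed (A ∩ (fun b => l t x b) ⁻¹' Iic (⨆ i, l t x (d i))) :=
        (hlcA t ht x).preimage_isClosed_of_isClosed hAc.isClosed isClosed_Iic
      have hsub : range d ⊆ A ∩ (fun b => l t x b) ⁻¹' Iic (⨆ i, l t x (d i)) := by
        rintro b ⟨i, rfl⟩
        refine ⟨hd i, ?_⟩
        have : l t x (d i) ≤ ⨆ i, l t x (d i) :=
          le_csSup (by rw [← hrange]; exact hbd) (mem_range_self i)
        exact this
      exact (closure_minimal hsub hcl (hdcl a ha)).2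
    calc ((sSup (l t x '' A) : ℝ) : EReal)
        ≤ ((⨆ i, l t x (d i) : ℝ) : EReal) := EReal.coe_le_coe_iff.2 hled
      _ = ⨆ i, ((l t x (d i) : ℝ) : EReal) :=
          Monotone.map_ciSup_of_continuousAt (continuous_coe_real_ereal.continuousAt)
            (fun a b hab => EReal.coe_le_coe_iff.2 hab)
            (by rw [← hrange]; exact hbd)
  refine ⟨fun t x => if t ∈ Icc (0:ℝ) T then (G t x).toReal else 0, ?_, ?_, ?_, ?_, ?_⟩
  · -- measurability in t
    intro x
    refine Measurable.ite measurableSet_Icc ?_ measurable_const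
    exact measurable_ereal_toReal.comp
      (Measurable.iSup fun i => measurable_coe_real_ereal.comp (hlm x (d i)))
  · -- continuity in x
    intro t ht
    have heq : (fun x : Eucl n => if t ∈ Icc (0:ℝ) T then (G t x).toReal else 0)
        = fun x => sSup (l t x '' A) := by
      funext x
      rw [if_pos ht, hGeq t ht x, EReal.toReal_coe]
    rw [heq]
    have hcont : ContinuousOn (fun x : Eucl n => sSup ((fun a => l t x a) '' A))
        (univ : Set (Eucl n)) :=
      continuousOn_sSup_image isClosed_univ hAc hA (hlc t ht)
    exact continuousOn_univ.1 hcont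
  · -- the bound on the effective domain
    intro t ht x v hv
    beta_reduce
    rw [if_pos ht, hGeq t ht x, EReal.toReal_coe]
    set M : ℝ := sSup (l t x '' A) with hM
    have hMb : BddAbove (l t x '' A) := hbdd t ht x
    set K : Set (Eucl n) := f t x '' A with hK
    have hKc : IsCompact K := hAc.image_of_continuousOn (hfcA t ht x)
    have hKne : K.Nonempty := hA.image _
    set C : Set (Eucl n) := closure (convexHull ℝ K) with hC
    have hHb : ∀ p : Eucl n, BddAbove ((fun a => ⟪p, f t x a⟫ - l t x a) '' A) := by
      intro p
      refine (hAc.image_of_continuousOn ?_).bddAbove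
      exact (((continuous_const.inner continuous_id).comp_continuousOn (hfcA t ht x)).sub
        (hlcA t ht x))
    by_cases hvC : v ∈ C
    · refine iSup_le fun p => EReal.coe_le_coe_iff.2 ?_
      set σ : ℝ := sSup ((fun u => ⟪p, u⟫) '' K) with hσ
      have hσb : BddAbove ((fun u => ⟪p, u⟫) '' K) :=
        (hKc.image_of_continuousOn
          ((continuous_const.inner continuous_id).continuousOn)).bddAbove
      have hvσ : ⟪p, v⟫ ≤ σ := by
        have hhs : Convex ℝ {z : Eucl n | ⟪p, z⟫ ≤ σ} :=
          convex_halfSpace_le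
            ⟨fun a b => inner_add_right p a b, fun c a => real_inner_smul_right p a c⟩ σ
        have hcls : IsClosed {z : Eucl n | ⟪p, z⟫ ≤ σ} :=
          isClosed_le (continuous_const.inner continuous_id) continuous_const
        have hsub : C ⊆ {z : Eucl n | ⟪p, z⟫ ≤ σ} :=
          closure_minimal (convexHull_min (fun z hz => le_csSup hσb ⟨z, hz, rfl⟩) hhs) hcls
        exact hsub hvC
      have hHσ : σ - M ≤ H t x p := by
        rw [hH, sub_le_iff_le_add]
        refine csSup_le (hKne.image _) ?_
        rintro y ⟨z, ⟨a, ha, rfl⟩, rfl⟩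
        have h1 : ⟪p, f t x a⟫ - l t x a ≤ sSup ((fun a => ⟪p, f t x a⟫ - l t x a) '' A) :=
          le_csSup (hHb p) ⟨a, ha, rfl⟩
        have h2 : l t x a ≤ M := le_csSup hMb ⟨a, ha, rfl⟩
        simp only
        linarith
      have hcomm : ⟪v, p⟫ = ⟪p, v⟫ := real_inner_comm p v
      linarith
    · exfalso
      apply hv
      obtain ⟨φ, s, hφC, hφv⟩ := geometric_hahn_banach_closed_point
        ((convex_convexHull ℝ K).closure) isClosed_closure hvC
      set p : Eucl n := (InnerProductSpace.toDual ℝ (Eucl n)).symm φ with hp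
      have hpy : ∀ y : Eucl n, ⟪p, y⟫ = φ y := fun y => InnerProductSpace.toDual_symm_apply
      have hδ : 0 < φ v - s := by linarith
      set mm : ℝ := sInf (l t x '' A) with hmm
      have hmb : BddBelow (l t x '' A) := (hAc.image_of_continuousOn (hlcA t ht x)).bddBelow
      rw [LFT, iSup_eq_top]
      intro b hb
      induction b using EReal.rec with
      | bot => exact ⟨0, EReal.bot_lt_coe _⟩
      | top => exact absurd hb (lt_irrefl _)
      | coe b =>
        set r : ℝ := max ((b - mm + 1) / (φ v - s)) 1 with hr
        have hr1 : (1:ℝ) ≤ r := le_max_right _ _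
        have hr0 : 0 < r := lt_of_lt_of_le one_pos hr1
        refine ⟨r • p, ?_⟩
        rw [EReal.coe_lt_coe_iff]
        have hH' : H t x (r • p) ≤ r * s - mm := by
          rw [hH]
          refine csSup_le (hA.image _) ?_
          rintro y ⟨a, ha, rfl⟩
          have h1 : ⟪r • p, f t x a⟫ = r * ⟪p, f t x a⟫ := real_inner_smul_left p _ r
          have h2 : φ (f t x a) < s :=
            hφC _ (subset_closure (subset_convexHull ℝ K ⟨a, ha, rfl⟩))
          have h3 : mm ≤ l t x a := csInf_le hmb ⟨a, ha, rfl⟩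
          have h4 : r * φ (f t x a) ≤ r * s := mul_le_mul_of_nonneg_left h2.le hr0.le
          simp only
          rw [h1, hpy]
          linarith
        have h5 : ⟪v, r • p⟫ = r * ⟪v, p⟫ := real_inner_smul_right v p r
        have h6 : ⟪v, p⟫ = φ v := by rw [real_inner_comm]; exact hpy v
        have h7 : (b - mm + 1) / (φ v - s) ≤ r := le_max_left _ _
        have h8 : b - mm + 1 ≤ r * (φ v - s) := by
          rw [div_le_iff₀ hδ] at h7; linarith
        rw [h5, h6]
        nlinarith
  · -- moduli of continuity
    intro R hR t ht x hx y hy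
    beta_reduce
    rw [if_pos ht.1, if_pos ht.1, hGeq t ht.1 x, hGeq t ht.1 y,
      EReal.toReal_coe, EReal.toReal_coe]
    exact abs_csSup_image_sub hA (hbdd t ht.1 x) (hbdd t ht.1 y)
      (fun a ha => hlw R hR t ht x hx y hy a ha)
  · -- joint continuity
    rintro ⟨-, hlC⟩
    have hg : ContinuousOn (fun q : ℝ × Eucl n => sSup ((fun a => l q.1 q.2 a) '' A))
        (Icc (0:ℝ) T ×ˢ (univ : Set (Eucl n))) := by
      refine continuousOn_sSup_image (isClosed_Icc.prod isClosed_univ) hAc hA ?_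
      have hmap : MapsTo (fun q : (ℝ × Eucl n) × Eucl m => (q.1.1, q.1.2, q.2))
          ((Icc (0:ℝ) T ×ˢ (univ : Set (Eucl n))) ×ˢ A)
          (Icc (0:ℝ) T ×ˢ (univ : Set (Eucl n)) ×ˢ A) := by
        rintro ⟨⟨t, x⟩, a⟩ ⟨⟨ht, -⟩, ha⟩
        exact ⟨ht, mem_univ _, ha⟩
      exact hlC.comp ((continuous_fst.fst.prodMk
        (continuous_fst.snd.prodMk continuous_snd)).continuousOn) hmap
    refine hg.congr ?_
    rintro ⟨t, x⟩ ⟨ht, -⟩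
    simp only [if_pos ht, hGeq t ht x, EReal.toReal_coe]
end
end

section
/- Let A ⊂ ℝ^m be nonempty and compact, and let f : [0,T]×ℝⁿ×A → ℝⁿ and l : [0,T]×ℝⁿ×A → ℝ be continuous in a for every (t,x). Assume that the set f(t,x,A) is convex for every (t,x). Define H(t,x,p) := sup_{a∈A}(⟨p, f(t,x,a)⟩ − l(t,x,a)) and L(t,x,·) := H*(t,x,·). Then f(t,x,A) = dom L(t,x,·) for all t ∈ [0,T], x ∈ ℝⁿ. -/
open Filter Topology MeasureTheory Set Metric
open scoped RealInnerProductSpace Pointwise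

noncomputable section

/-- Lemma 4.2 of the paper. If `A` is nonempty and compact, `f, l` are
continuous in `a`, the image `f(t,x,A)` is convex, and
`H(t,x,p) = sup_{a∈A}(⟨p, f(t,x,a)⟩ − l(t,x,a))`, then `f(t,x,A) = dom L(t,x,·)`
for all `t ∈ [0,T]` and `x`, where `L = H*`. -/
theorem image_eq_domain (n m : ℕ) (T : ℝ) (hT : 0 ≤ T)
    (A : Set (Eucl m)) (hA : A.Nonempty) (hAc : IsCompact A)
    (f : ℝ → Eucl n → Eucl m → Eucl n) (l : ℝ → Eucl n → Eucl m → ℝ)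
    (hfc : ∀ t ∈ Icc (0 : ℝ) T, ∀ x : Eucl n, ContinuousOn (fun a => f t x a) A)
    (hlc : ∀ t ∈ Icc (0 : ℝ) T, ∀ x : Eucl n, ContinuousOn (fun a => l t x a) A)
    (hconv : ∀ t ∈ Icc (0 : ℝ) T, ∀ x : Eucl n, Convex ℝ ((fun a => f t x a) '' A))
    (H : ℝ → Eucl n → Eucl n → ℝ)
    (hH : ∀ (t : ℝ) (x p : Eucl n),
      H t x p = sSup ((fun a => ⟪p, f t x a⟫ - l t x a) '' A)) :
    ∀ t ∈ Icc (0 : ℝ) T, ∀ x : Eucl n,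
      (fun a => f t x a) '' A = {v : Eucl n | LFT H t x v ≠ ⊤} := by

  intro t ht x
  have hf := hfc t ht x
  have hl := hlc t ht x
  obtain ⟨a₀, ha₀⟩ := hA
  have hcont : ∀ p : Eucl n, ContinuousOn (fun a => ⟪p, f t x a⟫ - l t x a) A := by
    intro p
    exact (ContinuousOn.inner continuousOn_const hf).sub hl
  have hbdd : ∀ p : Eucl n, BddAbove ((fun a => ⟪p, f t x a⟫ - l t x a) '' A) := by
    intro p
    exact (hAc.image_of_continuousOn (hcont p)).bddAbove
  ext v
  simp only [mem_image, mem_setOf_eq]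
  constructor
  · rintro ⟨a, haA, rfl⟩
    have hle : LFT H t x (f t x a) ≤ ((l t x a : ℝ) : EReal) := by
      refine iSup_le fun p => ?_
      have h1 : ⟪p, f t x a⟫ - l t x a ≤ H t x p := by
        rw [hH]; exact le_csSup (hbdd p) ⟨a, haA, rfl⟩
      have h2 : ⟪f t x a, p⟫ - H t x p ≤ l t x a := by
        rw [real_inner_comm]; linarith
      exact_mod_cast h2
    exact ne_top_of_le_ne_top (EReal.coe_ne_top _) hle
  · intro hv
    by_contra hvK
    apply hv
    -- separation
    obtain ⟨φ, u, hφ₁, hφ₂⟩ :=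
      geometric_hahn_banach_closed_point (hconv t ht x)
        ((hAc.image_of_continuousOn hf).isClosed) (by simpa using hvK)
    set p : Eucl n := (InnerProductSpace.toDual ℝ (Eucl n)).symm φ with hpdef
    have hp : ∀ w : Eucl n, ⟪p, w⟫ = φ w := by
      intro w
      simp [hpdef, InnerProductSpace.toDual_symm_apply]
    obtain ⟨am, hamA, ham⟩ := hAc.exists_isMinOn ⟨a₀, ha₀⟩ hl
    set c₀ := l t x am with hc₀
    have hd : 0 < φ v - u := by linarith
    rw [LFT, iSup_eq_top]
    intro b hb
    obtain ⟨r, hbr, -⟩ := EReal.exists_between_coe_real hb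
    set lam : ℝ := max ((r + 1 - c₀) / (φ v - u)) 0 with hlam
    have hlam0 : 0 ≤ lam := le_max_right _ _
    have hHle : H t x (lam • p) ≤ lam * u - c₀ := by
      rw [hH]
      refine csSup_le ⟨_, ⟨a₀, ha₀, rfl⟩⟩ ?_
      rintro y ⟨a, haA, rfl⟩
      have h1 : ⟪lam • p, f t x a⟫ = lam * ⟪p, f t x a⟫ := real_inner_smul_left _ _ _
      have h2 : ⟪p, f t x a⟫ ≤ u := by
        rw [hp]; exact le_of_lt (hφ₁ _ ⟨a, haA, rfl⟩)
      have h3 : lam * ⟪p, f t x a⟫ ≤ lam * u := mul_le_mul_of_nonneg_left h2 hlam0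
      have h4 : c₀ ≤ l t x a := isMinOn_iff.mp ham a haA
      simp only []
      rw [h1]; linarith
    have hvp : ⟪v, lam • p⟫ = lam * φ v := by
      rw [real_inner_smul_right, real_inner_comm, hp]
    have hge : r + 1 ≤ ⟪v, lam • p⟫ - H t x (lam • p) := by
      have h5 : (r + 1 - c₀) / (φ v - u) ≤ lam := le_max_left _ _
      have h6 : r + 1 - c₀ ≤ lam * (φ v - u) := by
        rw [div_le_iff₀ hd] at h5; linarith
      rw [hvp]; nlinarith
    refine ⟨lam • p, lt_of_lt_of_le hbr ?_⟩
    exact_mod_cast le_trans (by linarith : r ≤ r + 1) hge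
end
end

section
/- Fix (t,x) ∈ [0,T]×ℝⁿ and suppose that p ↦ H(t,x,p) is proper, convex and lower semicontinuous, and let L(t,x,·) = H*(t,x,·). Let A be a set and e : A → ℝⁿ×ℝ a map with e(t,x,A) = E_L(t,x) := {(v,η) : L(t,x,v) ≤ η}. If e(t,x,a) = (f(t,x,a), l(t,x,a)) for every a ∈ A, then H(t,x,p) = sup_{a∈A}(⟨p, f(t,x,a)⟩ − l(t,x,a)) for all p ∈ ℝⁿ; moreover f(t,x,A) = dom L(t,x,·) and l(t,x,a) ≥ −|H(t,x,0)| for every a ∈ A. -/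
open Filter Topology MeasureTheory Set Metric
open scoped RealInnerProductSpace Pointwise

noncomputable section

namespace EpiAux

variable {n : ℕ}

lemma mul_coe_le {a r : ℝ} (ha : 0 ≤ a) {x : EReal} (hx : x ≤ (r : EReal)) :
    (a : EReal) * x ≤ ((a * r : ℝ) : EReal) := by
  rcases ha.eq_or_lt with h0 | hpos
  · simp [← h0]
  · induction x with
    | bot => rw [EReal.coe_mul_bot_of_pos hpos]; exact bot_le
    | coe y =>
        rw [← EReal.coe_mul, EReal.coe_le_coe_iff]
        exact mul_le_mul_of_nonneg_left (EReal.coe_le_coe_iff.1 hx) ha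
    | top => simp at hx

lemma convex_epi (Hx : Eucl n → EReal) (hc : ∀ v u : Eucl n, ∀ a b : ℝ, 0 ≤ a → 0 ≤ b → a + b = 1 →
      Hx (a • v + b • u) ≤ (a : EReal) * Hx v + (b : EReal) * Hx u) :
    Convex ℝ {qr : Eucl n × ℝ | Hx qr.1 ≤ (qr.2 : EReal)} := by
  rintro ⟨q1, r1⟩ h1 ⟨q2, r2⟩ h2 a b ha hb hab
  simp only [mem_setOf_eq] at h1 h2 ⊢
  have hkey := hc q1 q2 a b ha hb hab
  have h3 : (a : EReal) * Hx q1 + (b : EReal) * Hx q2 ≤ ((a * r1 + b * r2 : ℝ) : EReal) := by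
    rw [EReal.coe_add]
    exact add_le_add (mul_coe_le ha h1) (mul_coe_le hb h2)
  have : (a • (q1, r1) + b • (q2, r2) : Eucl n × ℝ).1 = a • q1 + b • q2 := rfl
  have h2' : ((a • (q1, r1) + b • (q2, r2) : Eucl n × ℝ).2 : ℝ) = a * r1 + b * r2 := rfl
  rw [this, h2']
  exact hkey.trans h3

lemma isClosed_epi (Hx : Eucl n → EReal) (hl : LowerSemicontinuous Hx) :
    IsClosed {qr : Eucl n × ℝ | Hx qr.1 ≤ (qr.2 : EReal)} := by
  rw [← isOpen_compl_iff, isOpen_iff_mem_nhds]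
  rintro ⟨q, r⟩ hqr
  simp only [mem_compl_iff, mem_setOf_eq, not_le] at hqr
  obtain ⟨c, hrc, hcH⟩ := EReal.exists_between_coe_real hqr
  have h1 : {q' | (c : EReal) < Hx q'} ∈ 𝓝 q := hl q _ hcH
  have h2 : Iio c ∈ 𝓝 r := Iio_mem_nhds (EReal.coe_lt_coe_iff.1 hrc)
  refine Filter.mem_of_superset (prod_mem_nhds h1 h2) ?_
  rintro ⟨q', r'⟩ ⟨hq', hr'⟩
  simp only [mem_setOf_eq] at hq'
  simp only [mem_compl_iff, mem_setOf_eq, not_le]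
  exact lt_trans (EReal.coe_lt_coe_iff.2 hr') hq'

lemma separate {E : Set (Eucl n × ℝ)} (hconv : Convex ℝ E) (hcl : IsClosed E)
    {z : Eucl n × ℝ} (hz : z ∉ E) :
    ∃ (v0 : Eucl n) (β u : ℝ), (∀ qr ∈ E, ⟪v0, qr.1⟫ + qr.2 * β < u) ∧
      u < ⟪v0, z.1⟫ + z.2 * β := by
  obtain ⟨f, u, hfE, hfz⟩ := geometric_hahn_banach_closed_point hconv hcl hz
  set G : Eucl n →L[ℝ] ℝ := f.comp (ContinuousLinearMap.inl ℝ (Eucl n) ℝ) with hG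
  set v0 : Eucl n := (InnerProductSpace.toDual ℝ (Eucl n)).symm G with hv0
  have key : ∀ (q : Eucl n) (r : ℝ), ⟪v0, q⟫ + r * f ((0 : Eucl n), (1 : ℝ)) = f (q, r) := by
    intro q r
    have h1 : ⟪v0, q⟫ = f (q, 0) := by
      rw [hv0, InnerProductSpace.toDual_symm_apply]
      simp [hG]
    have h2 : (q, r) = (q, (0 : ℝ)) + r • ((0 : Eucl n), (1 : ℝ)) := by
      simp [Prod.ext_iff]
    rw [h2, map_add, _root_.map_smul, h1, smul_eq_mul]
  exact ⟨v0, f ((0 : Eucl n), (1 : ℝ)), u,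
    fun qr hqr => by rw [key qr.1 qr.2]; exact hfE qr hqr,
    by rw [key z.1 z.2]; exact hfz⟩




/-- If all epigraph points satisfy the strict linear bound with negative vertical
coefficient, the conjugate of the rescaled vector is bounded. -/
lemma conj_le (Hx : Eucl n → EReal) (hbot : ∀ q, Hx q ≠ ⊥)
    {v0 : Eucl n} {β u : ℝ} (hβ : β < 0)
    (hbd : ∀ qr : Eucl n × ℝ, Hx qr.1 ≤ (qr.2 : EReal) → ⟪v0, qr.1⟫ + qr.2 * β < u) :
    eConj Hx ((-β)⁻¹ • v0) ≤ ((u / (-β) : ℝ) : EReal) := by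
  have hγ : (0 : ℝ) < -β := by linarith
  refine iSup_le fun q => ?_
  cases hq : Hx q with
  | bot => exact absurd hq (hbot q)
  | top => rw [EReal.sub_top]; exact bot_le
  | coe h =>
    have hb : ⟪v0, q⟫ + h * β < u := hbd (q, h) (le_of_eq hq)
    rw [← EReal.coe_sub, EReal.coe_le_coe_iff]
    have hip : ⟪(-β)⁻¹ • v0, q⟫ = (-β)⁻¹ * ⟪v0, q⟫ := real_inner_smul_left _ _ _
    rw [hip, le_div_iff₀ hγ]
    have hβne : β ≠ 0 := hβ.ne
    have hexp : ((-β)⁻¹ * ⟪v0, q⟫ - h) * (-β) = ⟪v0, q⟫ + h * β := by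
      field_simp
      ring
    rw [hexp]
    exact hb.le

/-- Existence of an affine minorant: the conjugate is somewhere finite. -/
lemma minorant (Hx : Eucl n → EReal)
    (hp : (∀ v, Hx v ≠ ⊥) ∧ ∃ v, Hx v ≠ ⊤)
    (hconv : Convex ℝ {qr : Eucl n × ℝ | Hx qr.1 ≤ (qr.2 : EReal)})
    (hcl : IsClosed {qr : Eucl n × ℝ | Hx qr.1 ≤ (qr.2 : EReal)}) :
    ∃ (v1 : Eucl n) (m : ℝ), eConj Hx v1 ≤ (m : EReal) := by
  obtain ⟨p0, hp0⟩ := hp.2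
  set r0 : ℝ := (Hx p0).toReal with hr0def
  have hr0 : Hx p0 = (r0 : EReal) := (EReal.coe_toReal hp0 (hp.1 p0)).symm
  have hz : ((p0, r0 - 1) : Eucl n × ℝ) ∉ {qr : Eucl n × ℝ | Hx qr.1 ≤ (qr.2 : EReal)} := by
    simp only [mem_setOf_eq, not_le, hr0]
    exact EReal.coe_lt_coe_iff.2 (by linarith)
  obtain ⟨v0, β, u, hbd, hpt⟩ := separate hconv hcl hz
  have hmem0 : Hx p0 ≤ ((r0 : ℝ) : EReal) := le_of_eq hr0
  -- β ≤ 0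
  have hβle : β ≤ 0 := by
    by_contra hβpos
    push_neg at hβpos
    set t : ℝ := max 0 ((u - ⟪v0, p0⟫ - r0 * β) / β) with ht
    have htmem : Hx p0 ≤ ((r0 + t : ℝ) : EReal) := by
      rw [hr0]; exact EReal.coe_le_coe_iff.2 (by simp [ht, le_max_left])
    have hb := hbd (p0, r0 + t) htmem
    have h2 : (u - ⟪v0, p0⟫ - r0 * β) / β ≤ t := le_max_right _ _
    rw [div_le_iff₀ hβpos] at h2
    simp only at hb
    nlinarith
  have hβne : β ≠ 0 := by
    intro h0
    have h1 := hbd (p0, r0) hmem0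
    simp only [h0, mul_zero, add_zero] at h1 hpt
    linarith
  have hβ : β < 0 := lt_of_le_of_ne hβle hβne
  exact ⟨(-β)⁻¹ • v0, u / (-β), conj_le Hx hp.1 hβ fun qr hqr => hbd qr hqr⟩

/-- Key separation lemma: any real value below `Hx p` is attained by an epigraph point. -/
lemma key (Hx : Eucl n → EReal)
    (hp : (∀ v, Hx v ≠ ⊥) ∧ ∃ v, Hx v ≠ ⊤)
    (hconv : Convex ℝ {qr : Eucl n × ℝ | Hx qr.1 ≤ (qr.2 : EReal)})
    (hcl : IsClosed {qr : Eucl n × ℝ | Hx qr.1 ≤ (qr.2 : EReal)})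
    (p : Eucl n) (c : ℝ) (hlt : (c : EReal) < Hx p) :
    ∃ (v : Eucl n) (η : ℝ), eConj Hx v ≤ (η : EReal) ∧ c < ⟪p, v⟫ - η := by
  obtain ⟨p0, hp0⟩ := hp.2
  set r0 : ℝ := (Hx p0).toReal with hr0def
  have hr0 : Hx p0 = (r0 : EReal) := (EReal.coe_toReal hp0 (hp.1 p0)).symm
  have hmem0 : Hx p0 ≤ ((r0 : ℝ) : EReal) := le_of_eq hr0
  have hz : ((p, c) : Eucl n × ℝ) ∉ {qr : Eucl n × ℝ | Hx qr.1 ≤ (qr.2 : EReal)} := by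
    simp only [mem_setOf_eq, not_le]
    exact hlt
  obtain ⟨v0, β, u, hbd, hpt⟩ := separate hconv hcl hz
  simp only at hpt
  have hβle : β ≤ 0 := by
    by_contra hβpos
    push_neg at hβpos
    set t : ℝ := max 0 ((u - ⟪v0, p0⟫ - r0 * β) / β) with ht
    have htmem : Hx p0 ≤ ((r0 + t : ℝ) : EReal) := by
      rw [hr0]; exact EReal.coe_le_coe_iff.2 (by simp [ht, le_max_left])
    have hb := hbd (p0, r0 + t) htmem
    have h2 : (u - ⟪v0, p0⟫ - r0 * β) / β ≤ t := le_max_right _ _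
    rw [div_le_iff₀ hβpos] at h2
    simp only at hb
    nlinarith
  rcases hβle.lt_or_eq with hβ | hβ0
  · -- nonvertical case
    have hγ : (0 : ℝ) < -β := by linarith
    refine ⟨(-β)⁻¹ • v0, u / (-β), conj_le Hx hp.1 hβ fun qr hqr => hbd qr hqr, ?_⟩
    have hip : ⟪p, (-β)⁻¹ • v0⟫ = (-β)⁻¹ * ⟪v0, p⟫ := by
      rw [real_inner_smul_right, real_inner_comm p v0]
    rw [hip, inv_mul_eq_div, ← sub_div, lt_div_iff₀ hγ]
    nlinarith
  · -- vertical case: Hx p = ⊤ morally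
    subst hβ0
    simp only [mul_zero, add_zero] at hbd hpt
    obtain ⟨v1, m, hv1⟩ := minorant Hx hp hconv hcl
    set δ : ℝ := ⟪v0, p⟫ - u with hδdef
    have hδ : 0 < δ := by simp only [hδdef]; linarith
    set A0 : ℝ := ⟪p, v1⟫ - m with hA0
    set lam : ℝ := max 0 ((c + 1 - A0) / δ) with hlam
    have hlam0 : 0 ≤ lam := le_max_left _ _
    have hlamδ : c + 1 - A0 ≤ lam * δ := by
      have := le_max_right 0 ((c + 1 - A0) / δ)
      rwa [div_le_iff₀ hδ] at this
    refine ⟨v1 + lam • v0, m + lam * u, ?_, ?_⟩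
    · refine iSup_le fun q => ?_
      cases hq : Hx q with
      | bot => exact absurd hq (hp.1 q)
      | top => rw [EReal.sub_top]; exact bot_le
      | coe h =>
        have hterm : (((⟪v1, q⟫ : ℝ) : EReal) - Hx q) ≤ (m : EReal) :=
          le_trans (le_iSup (fun p' => (((⟪v1, p'⟫ : ℝ) : EReal) - Hx p')) q) hv1
        rw [hq, ← EReal.coe_sub, EReal.coe_le_coe_iff] at hterm
        have hq0 : ⟪v0, q⟫ < u := hbd (q, h) (le_of_eq hq)
        rw [← EReal.coe_sub, EReal.coe_le_coe_iff]
        have hip : ⟪v1 + lam • v0, q⟫ = ⟪v1, q⟫ + lam * ⟪v0, q⟫ := by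
          rw [inner_add_left, real_inner_smul_left]
        rw [hip]
        nlinarith
    · have hip : ⟪p, v1 + lam • v0⟫ = ⟪p, v1⟫ + lam * ⟪p, v0⟫ := by
        rw [inner_add_right, real_inner_smul_right]
      rw [hip]
      nlinarith [real_inner_comm p v0, hlamδ, hδ]

end EpiAux

/-- Proposition 5.1 of the paper. Fix `(t,x)` and write
`Hx := H(t,x,·)`, assumed proper, convex, lower semicontinuous, and `L(t,x,·) = H*(t,x,·)`.
If `e : A → ℝⁿ×ℝ` parametrizes the epigraph `E_L(t,x)`, i.e. `e(A) = E_L(t,x)`, and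
`e a = (f a, l a)`, then `Hx p = sup_{a∈A}(⟨p, f a⟩ − l a)`, the image of `f` is
`dom L(t,x,·)`, and `l a ≥ −|Hx 0|`. -/

theorem epigraph_parametrization_represents (n : ℕ)
    (Hx : Eucl n → EReal)
    (hp : EProper Hx) (hc : EConvex Hx) (hl : LowerSemicontinuous Hx)
    {A : Type*} (e : A → Eucl n × ℝ)
    (he : range e = {q : Eucl n × ℝ | eConj Hx q.1 ≤ (q.2 : EReal)}) :
    (∀ p : Eucl n,
      Hx p = ⨆ a : A, ((⟪p, (e a).1⟫ - (e a).2 : ℝ) : EReal)) ∧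
    (range (fun a => (e a).1) = {v : Eucl n | eConj Hx v ≠ ⊤}) ∧
    (∀ a : A, -(max (Hx 0) (-(Hx 0))) ≤ (((e a).2 : ℝ) : EReal)) := by
  have hconv := EpiAux.convex_epi Hx hc
  have hcl := EpiAux.isClosed_epi Hx hl
  obtain ⟨p0, hp0⟩ := hp.2
  have hne_bot : ∀ v, eConj Hx v ≠ ⊥ := by
    intro v hbot
    have h1 : (((⟪v, p0⟫ : ℝ) : EReal) - Hx p0) ≤ eConj Hx v :=
      le_iSup (fun p' => (((⟪v, p'⟫ : ℝ) : EReal) - Hx p')) p0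
    rw [hbot, le_bot_iff, (EReal.coe_toReal hp0 (hp.1 p0)).symm, ← EReal.coe_sub] at h1
    exact EReal.coe_ne_bot _ h1
  have hub : ∀ (p v : Eucl n) (η : ℝ), eConj Hx v ≤ (η : EReal) →
      ((⟪p, v⟫ - η : ℝ) : EReal) ≤ Hx p := by
    intro p v η hvη
    have h1 : (((⟪v, p⟫ : ℝ) : EReal) - Hx p) ≤ (η : EReal) :=
      le_trans (le_iSup (fun p' => (((⟪v, p'⟫ : ℝ) : EReal) - Hx p')) p) hvη
    cases hq : Hx p with
    | bot => exact absurd hq (hp.1 p)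
    | top => exact le_top
    | coe h =>
      rw [hq, ← EReal.coe_sub, EReal.coe_le_coe_iff] at h1
      rw [EReal.coe_le_coe_iff]
      have hcomm := real_inner_comm p v
      linarith
  refine ⟨fun p => ?_, ?_, fun a => ?_⟩
  · refine le_antisymm ?_ (iSup_le fun a => ?_)
    · by_contra hcon
      push_neg at hcon
      obtain ⟨c, h1, h2⟩ := EReal.exists_between_coe_real hcon
      obtain ⟨v, η, hvη, hcv⟩ := EpiAux.key Hx hp hconv hcl p c h2
      have hmem : (v, η) ∈ range e := by rw [he]; exact hvη
      obtain ⟨a, ha⟩ := hmem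
      have hterm : ((⟪p, (e a).1⟫ - (e a).2 : ℝ) : EReal) ≤
          ⨆ a' : A, ((⟪p, (e a').1⟫ - (e a').2 : ℝ) : EReal) :=
        le_iSup (fun a' => ((⟪p, (e a').1⟫ - (e a').2 : ℝ) : EReal)) a
      rw [ha] at hterm
      have hfin : (c : EReal) < ((⟪p, v⟫ - η : ℝ) : EReal) := EReal.coe_lt_coe_iff.2 hcv
      exact absurd ((hfin.trans_le hterm).trans h1) (lt_irrefl _)
    · have hmem : e a ∈ {q : Eucl n × ℝ | eConj Hx q.1 ≤ (q.2 : EReal)} := by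
        rw [← he]; exact mem_range_self a
      exact hub p (e a).1 (e a).2 hmem
  · ext v
    simp only [mem_range, mem_setOf_eq]
    constructor
    · rintro ⟨a, rfl⟩
      have hmem : e a ∈ {q : Eucl n × ℝ | eConj Hx q.1 ≤ (q.2 : EReal)} := by
        rw [← he]; exact mem_range_self a
      exact ne_top_of_le_ne_top (EReal.coe_ne_top _) hmem
    · intro hv
      have hvb := hne_bot v
      have hco : eConj Hx v = ((eConj Hx v).toReal : EReal) := (EReal.coe_toReal hv hvb).symm
      have hmem : (v, (eConj Hx v).toReal) ∈ range e := by
        rw [he]; exact le_of_eq hco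
      obtain ⟨a, ha⟩ := hmem
      exact ⟨a, congrArg Prod.fst ha⟩
  · have hmem : eConj Hx (e a).1 ≤ (((e a).2 : ℝ) : EReal) := by
      have h0 : e a ∈ {q : Eucl n × ℝ | eConj Hx q.1 ≤ (q.2 : EReal)} := by
        rw [← he]; exact mem_range_self a
      exact h0
    have h1 : -(Hx 0) ≤ eConj Hx (e a).1 := by
      have h2 : (((⟪(e a).1, (0 : Eucl n)⟫ : ℝ) : EReal) - Hx 0) ≤ eConj Hx (e a).1 :=
        le_iSup (fun p' => (((⟪(e a).1, p'⟫ : ℝ) : EReal) - Hx p')) 0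
      rwa [inner_zero_right, EReal.coe_zero, sub_eq_add_neg, zero_add] at h2
    exact le_trans (le_trans (EReal.neg_le_neg_iff.2 (le_max_left _ _)) h1) hmem
end
end

section
/- Fix (t,x) ∈ [0,T]×ℝⁿ and suppose p ↦ H(t,x,p) is proper, convex and lower semicontinuous, and let L(t,x,·) = H*(t,x,·). Suppose λ(t,x) ∈ ℝ satisfies L(t,x,v) ≤ λ(t,x) for all v ∈ dom L(t,x,·). Let B be the closed unit ball of ℝ^{n+1} and let e : B → ℝⁿ×ℝ satisfy E_{λ,L}(t,x) ⊂ e(t,x,B) ⊂ E_L(t,x), where E_{λ,L}(t,x) := {(v,η) : L(t,x,v) ≤ η ≤ λ(t,x)} and E_L(t,x) := {(v,η) : L(t,x,v) ≤ η}. If e(t,x,a) = (f(t,x,a), l(t,x,a)) for all a ∈ B, then H(t,x,p) = sup_{a∈B}(⟨p, f(t,x,a)⟩ − l(t,x,a)) for all p ∈ ℝⁿ, and f(t,x,B) = dom L(t,x,·). -/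
open Filter Topology MeasureTheory Set Metric
open scoped RealInnerProductSpace Pointwise

noncomputable section

section FM

variable {n : ℕ} (φ : Eucl n → EReal)

lemma sep_lemma (hc : EConvex φ) (hl : LowerSemicontinuous φ) (hpb : ∀ p, φ p ≠ ⊥)
    (hp1 : ∃ p, φ p ≠ ⊤)
    (p₀ : Eucl n) (r : ℝ) (hr : (r : EReal) < φ p₀) :
    ∃ (g : Eucl n →L[ℝ] ℝ) (s u : ℝ), 0 ≤ s ∧ g p₀ + r * s < u ∧
      ∀ p : Eucl n, ∀ y : ℝ, φ p ≤ (y : EReal) → u < g p + y * s := by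
  classical
  set S : Set (Eucl n × ℝ) := {q | φ q.1 ≤ (q.2 : EReal)} with hS
  have hcl : IsClosed S := by
    have h1 : IsClosed {q : Eucl n × EReal | φ q.1 ≤ q.2} := hl.isClosed_epigraph
    have h2 : S = (fun q : Eucl n × ℝ => (q.1, (q.2 : EReal))) ⁻¹'
        {q : Eucl n × EReal | φ q.1 ≤ q.2} := rfl
    rw [h2]
    exact h1.preimage (continuous_fst.prodMk (continuous_coe_real_ereal.comp continuous_snd))
  have hconv : Convex ℝ S := by
    rintro ⟨p₁, y₁⟩ h₁ ⟨p₂, y₂⟩ h₂ a b ha hb hab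
    simp only [hS, mem_setOf_eq] at h₁ h₂ ⊢
    have := hc p₁ p₂ a b ha hb hab
    refine le_trans this ?_
    have e1 : (a : EReal) * φ p₁ ≤ (a : EReal) * (y₁ : EReal) :=
      mul_le_mul_of_nonneg_left h₁ (by exact_mod_cast ha)
    have e2 : (b : EReal) * φ p₂ ≤ (b : EReal) * (y₂ : EReal) :=
      mul_le_mul_of_nonneg_left h₂ (by exact_mod_cast hb)
    refine le_trans (add_le_add e1 e2) ?_
    rw [← EReal.coe_mul, ← EReal.coe_mul, ← EReal.coe_add]
    simp [Prod.smul_mk, smul_eq_mul]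
  have hnot : (p₀, r) ∉ S := fun h => (not_le.2 hr) h
  obtain ⟨f, u, hfu, hSf⟩ := geometric_hahn_banach_point_closed hconv hcl hnot
  set g : Eucl n →L[ℝ] ℝ := f.comp (ContinuousLinearMap.inl ℝ (Eucl n) ℝ) with hg
  set s : ℝ := f (0, 1) with hsdef
  have hf : ∀ p : Eucl n, ∀ y : ℝ, f (p, y) = g p + y * s := by
    intro p y
    have hxy : (p, y) = ((p, 0) : Eucl n × ℝ) + y • ((0 : Eucl n), (1 : ℝ)) := by
      simp [Prod.ext_iff]
    rw [hxy, map_add, f.map_smul, smul_eq_mul]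
    rfl
  have hs0 : 0 ≤ s := by
    by_contra hs
    push_neg at hs
    obtain ⟨p₁, hp₁⟩ := hp1
    set y₁ : ℝ := (φ p₁).toReal with hy₁def
    have hy₁ : φ p₁ ≤ (y₁ : EReal) := (EReal.coe_toReal hp₁ (hpb p₁)).symm.le
    set m : ℝ := max 0 ((u - g p₁) / s - y₁) with hm
    have hm0 : 0 ≤ m := le_max_left _ _
    have hmem : (p₁, y₁ + m) ∈ S := by
      refine le_trans hy₁ ?_
      exact_mod_cast le_add_of_nonneg_right hm0
    have hlt := hSf _ hmem
    rw [hf] at hlt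
    have h1 : (u - g p₁) / s ≤ y₁ + m := by
      have := le_max_right 0 ((u - g p₁) / s - y₁)
      have hmge : (u - g p₁) / s - y₁ ≤ m := this
      linarith
    have h2 : (y₁ + m) * s ≤ ((u - g p₁) / s) * s := mul_le_mul_of_nonpos_right h1 hs.le
    rw [div_mul_cancel₀ _ (ne_of_lt hs)] at h2
    linarith
  refine ⟨g, s, u, hs0, by rw [← hf]; exact hfu, fun p y hy => ?_⟩
  have := hSf (p, y) hy
  rwa [hf] at this

lemma conj_bound (hpb : ∀ p, φ p ≠ ⊥) (g : Eucl n →L[ℝ] ℝ) (s u : ℝ) (hs : 0 < s)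
    (hub : ∀ p : Eucl n, ∀ y : ℝ, φ p ≤ (y : EReal) → u < g p + y * s) :
    eConj φ ((-s⁻¹) • (InnerProductSpace.toDual ℝ (Eucl n)).symm g) ≤ ((-u / s : ℝ) : EReal) := by
  set q : Eucl n := (-s⁻¹) • (InnerProductSpace.toDual ℝ (Eucl n)).symm g with hqdef
  have hq : ∀ p : Eucl n, ⟪q, p⟫ = -s⁻¹ * g p := fun p => by
    rw [hqdef, real_inner_smul_left, InnerProductSpace.toDual_symm_apply]
  refine iSup_le fun p => ?_
  rcases eq_or_ne (φ p) ⊤ with h | h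
  · rw [h, EReal.sub_top]; exact bot_le
  · obtain ⟨y, hy⟩ : ∃ y : ℝ, φ p = (y : EReal) :=
      ⟨(φ p).toReal, (EReal.coe_toReal h (hpb p)).symm⟩
    rw [hy, ← EReal.coe_sub, EReal.coe_le_coe_iff]
    have key : u * s⁻¹ < (g p + y * s) * s⁻¹ :=
      mul_lt_mul_of_pos_right (hub p y hy.le) (inv_pos.2 hs)
    have h2 : u * s⁻¹ < g p * s⁻¹ + y := by
      have heq : (g p + y * s) * s⁻¹ = g p * s⁻¹ + y := by field_simp
      linarith [heq ▸ key]
    rw [hq p, div_eq_mul_inv]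
    linarith

lemma exists_conj_finite (hc : EConvex φ) (hl : LowerSemicontinuous φ) (hp : EProper φ) :
    ∃ (q : Eucl n) (c : ℝ), eConj φ q ≤ (c : EReal) := by
  obtain ⟨p₁, hp₁⟩ := hp.2
  obtain ⟨y₁, hy₁⟩ : ∃ y : ℝ, φ p₁ = (y : EReal) :=
    ⟨(φ p₁).toReal, (EReal.coe_toReal hp₁ (hp.1 p₁)).symm⟩
  have hr : ((y₁ - 1 : ℝ) : EReal) < φ p₁ := by
    rw [hy₁]; exact_mod_cast sub_one_lt y₁
  obtain ⟨g, s, u, hs0, hlt, hub⟩ := sep_lemma φ hc hl hp.1 hp.2 p₁ (y₁ - 1) hr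
  have hs : 0 < s := by
    rcases hs0.lt_or_eq with h | h
    · exact h
    · exfalso
      have h1 := hub p₁ y₁ hy₁.le
      nlinarith
  exact ⟨_, _, conj_bound φ hp.1 g s u hs hub⟩

lemma fenchel_moreau (hp : EProper φ) (hc : EConvex φ) (hl : LowerSemicontinuous φ)
    (p₀ : Eucl n) : φ p₀ = eConj (eConj φ) p₀ := by
  refine le_antisymm ?_ ?_
  · -- φ p₀ ≤ biconj
    have key : ∀ r : ℝ, (r : EReal) < φ p₀ → (r : EReal) ≤ eConj (eConj φ) p₀ := by
      intro r hr
      obtain ⟨g, s, u, hs0, hlt, hub⟩ := sep_lemma φ hc hl hp.1 hp.2 p₀ r hr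
      rcases hs0.eq_or_lt with hs | hs
      · -- s = 0
        rw [← hs] at hlt hub
        simp only [mul_zero, add_zero] at hlt hub
        obtain ⟨q₀, c₀, hq₀⟩ := exists_conj_finite φ hc hl hp
        set q' : Eucl n := -((InnerProductSpace.toDual ℝ (Eucl n)).symm g) with hq'def
        have hq' : ∀ p : Eucl n, ⟪q', p⟫ = -(g p) := fun p => by
          rw [hq'def, inner_neg_left, InnerProductSpace.toDual_symm_apply]
        have hq'r : ∀ p : Eucl n, ⟪p, q'⟫ = -(g p) := fun p => by
          rw [hq'def, inner_neg_right, real_inner_comm, InnerProductSpace.toDual_symm_apply]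
        set d : ℝ := u - g p₀ with hd
        have hd0 : 0 < d := by simp only [hd]; linarith
        set t : ℝ := max 0 ((r - ⟪p₀, q₀⟫ + c₀) / d) with ht
        have ht0 : 0 ≤ t := le_max_left _ _
        have claim : eConj φ (q₀ + t • q') ≤ ((c₀ - t * u : ℝ) : EReal) := by
          refine iSup_le fun p => ?_
          rcases eq_or_ne (φ p) ⊤ with h | h
          · rw [h, EReal.sub_top]; exact bot_le
          · obtain ⟨y, hy⟩ : ∃ y : ℝ, φ p = (y : EReal) :=
              ⟨(φ p).toReal, (EReal.coe_toReal h (hp.1 p)).symm⟩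
            rw [hy, ← EReal.coe_sub, EReal.coe_le_coe_iff]
            have hterm : ⟪q₀, p⟫ - y ≤ c₀ := by
              have hle : ((⟪q₀, p⟫ : ℝ) : EReal) - φ p ≤ eConj φ q₀ :=
                le_iSup (fun p => ((⟪q₀, p⟫ : ℝ) : EReal) - φ p) p
              rw [hy, ← EReal.coe_sub] at hle
              exact_mod_cast hle.trans hq₀
            have hgp : u < g p := hub p y hy.le
            have hmul : t * u ≤ t * g p := mul_le_mul_of_nonneg_left hgp.le ht0
            have hinner : ⟪q₀ + t • q', p⟫ = ⟪q₀, p⟫ - t * g p := by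
              rw [inner_add_left, real_inner_smul_left, hq' p]; ring
            rw [hinner]
            linarith
        have hval : r ≤ ⟪p₀, q₀ + t • q'⟫ - (c₀ - t * u) := by
          have hinner : ⟪p₀, q₀ + t • q'⟫ = ⟪p₀, q₀⟫ - t * g p₀ := by
            rw [inner_add_right, real_inner_smul_right, hq'r p₀]; ring
          have htd : (r - ⟪p₀, q₀⟫ + c₀) ≤ t * d := by
            have h1 : (r - ⟪p₀, q₀⟫ + c₀) / d ≤ t := le_max_right _ _
            have h2 := mul_le_mul_of_nonneg_right h1 hd0.le
            rwa [div_mul_cancel₀ _ hd0.ne'] at h2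
          rw [hinner]
          simp only [hd] at htd
          nlinarith
        calc (r : EReal) ≤ ((⟪p₀, q₀ + t • q'⟫ - (c₀ - t * u) : ℝ) : EReal) := by
              exact_mod_cast hval
          _ = ((⟪p₀, q₀ + t • q'⟫ : ℝ) : EReal) - ((c₀ - t * u : ℝ) : EReal) := by
              rw [← EReal.coe_sub]
          _ ≤ ((⟪p₀, q₀ + t • q'⟫ : ℝ) : EReal) - eConj φ (q₀ + t • q') :=
              EReal.sub_le_sub le_rfl claim
          _ ≤ eConj (eConj φ) p₀ :=
              le_iSup (fun v => ((⟪p₀, v⟫ : ℝ) : EReal) - eConj φ v) (q₀ + t • q')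
      · -- s > 0
        have hcb := conj_bound φ hp.1 g s u hs hub
        set q : Eucl n := (-s⁻¹) • (InnerProductSpace.toDual ℝ (Eucl n)).symm g with hqdef
        have hq : ⟪p₀, q⟫ = -s⁻¹ * g p₀ := by
          rw [real_inner_comm, hqdef, real_inner_smul_left,
            InnerProductSpace.toDual_symm_apply]
        have hval : r ≤ ⟪p₀, q⟫ - (-u / s) := by
          have key : (g p₀ + r * s) * s⁻¹ < u * s⁻¹ :=
            mul_lt_mul_of_pos_right hlt (inv_pos.2 hs)
          have heq : (g p₀ + r * s) * s⁻¹ = g p₀ * s⁻¹ + r := by field_simp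
          rw [hq, div_eq_mul_inv]
          rw [heq] at key
          linarith
        calc (r : EReal) ≤ ((⟪p₀, q⟫ - (-u / s) : ℝ) : EReal) := by exact_mod_cast hval
          _ = ((⟪p₀, q⟫ : ℝ) : EReal) - ((-u / s : ℝ) : EReal) := by rw [← EReal.coe_sub]
          _ ≤ ((⟪p₀, q⟫ : ℝ) : EReal) - eConj φ q := EReal.sub_le_sub le_rfl hcb
          _ ≤ eConj (eConj φ) p₀ :=
              le_iSup (fun v => ((⟪p₀, v⟫ : ℝ) : EReal) - eConj φ v) q
    by_contra hcon
    push_neg at hcon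
    obtain ⟨r, hr1, hr2⟩ := EReal.exists_between_coe_real hcon
    exact absurd (key r hr2) (not_le.2 hr1)
  · -- biconj ≤ φ p₀
    refine iSup_le fun v => ?_
    rcases eq_or_ne (φ p₀) ⊤ with h | h
    · rw [h]; exact le_top
    · obtain ⟨y, hy⟩ : ∃ y : ℝ, φ p₀ = (y : EReal) :=
        ⟨(φ p₀).toReal, (EReal.coe_toReal h (hp.1 p₀)).symm⟩
      have hle : ((⟪v, p₀⟫ - y : ℝ) : EReal) ≤ eConj φ v := by
        have := le_iSup (fun p => ((⟪v, p⟫ : ℝ) : EReal) - φ p) p₀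
        rwa [hy, ← EReal.coe_sub] at this
      rw [hy]
      set c := eConj φ v with hcv
      clear_value c
      induction c using EReal.rec with
      | bot => exact absurd (le_bot_iff.1 hle) (EReal.coe_ne_bot _)
      | coe z =>
          rw [← EReal.coe_sub, EReal.coe_le_coe_iff]
          rw [EReal.coe_le_coe_iff] at hle
          rw [real_inner_comm] at hle
          linarith
      | top => rw [EReal.sub_top]; exact bot_le

end FM

/-- Proposition 5.7 of the paper. Fix `(t,x)` and write
`Hx := H(t,x,·)`, proper, convex, lower semicontinuous, with `L = Hx*` bounded by `λ` on
its effective domain. If `e : B → ℝⁿ×ℝ` (with `B` the closed unit ball of `ℝ^{n+1}`)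
satisfies `E_{λ,L} ⊆ e(B) ⊆ E_L` and `e a = (f a, l a)`, then
`Hx p = sup_{a∈B}(⟨p, f a⟩ − l a)` and `f(B) = dom L`. -/
theorem squeezed_parametrization_represents (n : ℕ)
    (Hx : Eucl n → EReal)
    (hp : EProper Hx) (hc : EConvex Hx) (hl : LowerSemicontinuous Hx)
    (lam : ℝ)
    (hbound : ∀ v : Eucl n, eConj Hx v ≠ ⊤ → eConj Hx v ≤ ((lam : ℝ) : EReal))
    (e : Eucl (n + 1) → Eucl n × ℝ)
    (he1 : {q : Eucl n × ℝ | eConj Hx q.1 ≤ (q.2 : EReal) ∧ q.2 ≤ lam} ⊆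
      e '' closedBall (0 : Eucl (n + 1)) 1)
    (he2 : e '' closedBall (0 : Eucl (n + 1)) 1 ⊆
      {q : Eucl n × ℝ | eConj Hx q.1 ≤ (q.2 : EReal)}) :
    (∀ p : Eucl n,
      Hx p = ⨆ a : closedBall (0 : Eucl (n + 1)) 1,
        ((⟪p, (e a).1⟫ - (e a).2 : ℝ) : EReal)) ∧
    (fun a => (e a).1) '' closedBall (0 : Eucl (n + 1)) 1 =
      {v : Eucl n | eConj Hx v ≠ ⊤} := by
  
  have hLbot : ∀ v : Eucl n, eConj Hx v ≠ ⊥ := by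
    intro v
    obtain ⟨p₁, hp₁⟩ := hp.2
    obtain ⟨y₁, hy₁⟩ : ∃ y : ℝ, Hx p₁ = (y : EReal) :=
      ⟨(Hx p₁).toReal, (EReal.coe_toReal hp₁ (hp.1 p₁)).symm⟩
    have hle : ((⟪v, p₁⟫ - y₁ : ℝ) : EReal) ≤ eConj Hx v := by
      have := le_iSup (fun p => ((⟪v, p⟫ : ℝ) : EReal) - Hx p) p₁
      rwa [hy₁, ← EReal.coe_sub] at this
    intro hbot
    rw [hbot] at hle
    exact (EReal.coe_ne_bot _) (le_bot_iff.1 hle)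
  constructor
  · intro p
    rw [fenchel_moreau Hx hp hc hl p]
    apply le_antisymm
    · refine iSup_le fun v => ?_
      rcases eq_or_ne (eConj Hx v) ⊤ with h | h
      · rw [h, EReal.sub_top]; exact bot_le
      · obtain ⟨y, hy⟩ : ∃ y : ℝ, eConj Hx v = (y : EReal) :=
          ⟨(eConj Hx v).toReal, (EReal.coe_toReal h (hLbot v)).symm⟩
        have hylam : y ≤ lam := by
          have := hbound v h
          rw [hy] at this
          exact_mod_cast this
        obtain ⟨a, ha, hea⟩ := he1 (show (v, y) ∈ _ from ⟨hy.le, hylam⟩)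
        refine le_trans ?_
          (le_iSup (fun a : closedBall (0 : Eucl (n + 1)) 1 =>
            ((⟪p, (e a).1⟫ - (e a).2 : ℝ) : EReal)) ⟨a, ha⟩)
        have h1 : ((⟪p, (e a).1⟫ - (e a).2 : ℝ) : EReal)
            = ((⟪p, v⟫ : ℝ) : EReal) - eConj Hx v := by
          rw [hea, hy, EReal.coe_sub]
        exact h1.ge
    · refine iSup_le fun a => ?_
      have hmem := he2 ⟨(a : Eucl (n + 1)), a.2, rfl⟩
      calc ((⟪p, (e a).1⟫ - (e a).2 : ℝ) : EReal)
          = ((⟪p, (e a).1⟫ : ℝ) : EReal) - (((e a).2 : ℝ) : EReal) := by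
            rw [← EReal.coe_sub]
        _ ≤ ((⟪p, (e a).1⟫ : ℝ) : EReal) - eConj Hx (e a).1 :=
            EReal.sub_le_sub le_rfl hmem
        _ ≤ eConj (eConj Hx) p :=
            le_iSup (fun v => ((⟪p, v⟫ : ℝ) : EReal) - eConj Hx v) (e (a : Eucl (n + 1))).1
  · ext v
    simp only [mem_image, mem_setOf_eq]
    constructor
    · rintro ⟨a, ha, rfl⟩
      have hmem : eConj Hx (e a).1 ≤ (((e a).2 : ℝ) : EReal) := he2 ⟨a, ha, rfl⟩
      intro htop
      rw [htop] at hmem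
      exact (EReal.coe_ne_top _) (top_le_iff.1 hmem)
    · intro htop
      have hla := hbound v htop
      obtain ⟨a, ha, hea⟩ := he1 (show (v, lam) ∈ _ from ⟨hla, le_rfl⟩)
      exact ⟨a, ha, by rw [hea]⟩
end
end
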